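/- arXiv:1303.3173 — 6 statements merged into one kernel-verified Lean document; each statement's English description precedes it below -/
import Mathlib

section
/- Let R be a commutative ring and s ∈ R. A matrix A ∈ K_s(R) is a unit of the generalized matrix ring K_s(R) if and only if det_s(A) is a unit of R; moreover, in this case, if A = [[a,b],[c,d]], then A⁻¹ = det_s(A)⁻¹·[[d,−b],[−c,a]] (computed in K_s(R)). -/
/-- The generalized matrix ring `K_s(R)` with multiplier `s`. -/
@[ext]
structure GenMatrix (R : Type*) (s : R) where
  a : R
  b : R
  c : R
  d : R

namespace GenMatrix

variable {R : Type*} [Ring R] {s : R}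

instance : Add (GenMatrix R s) :=
  ⟨fun X Y => ⟨X.a + Y.a, X.b + Y.b, X.c + Y.c, X.d + Y.d⟩⟩
instance : Neg (GenMatrix R s) := ⟨fun X => ⟨-X.a, -X.b, -X.c, -X.d⟩⟩
instance : Zero (GenMatrix R s) := ⟨⟨0, 0, 0, 0⟩⟩
instance : One (GenMatrix R s) := ⟨⟨1, 0, 0, 1⟩⟩
instance : Mul (GenMatrix R s) :=
  ⟨fun X Y => ⟨X.a * Y.a + s * (X.b * Y.c), X.a * Y.b + X.b * Y.d,
    X.c * Y.a + X.d * Y.c, s * (X.c * Y.b) + X.d * Y.d⟩⟩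

@[simp] lemma add_a (X Y : GenMatrix R s) : (X + Y).a = X.a + Y.a := rfl
@[simp] lemma add_b (X Y : GenMatrix R s) : (X + Y).b = X.b + Y.b := rfl
@[simp] lemma add_c (X Y : GenMatrix R s) : (X + Y).c = X.c + Y.c := rfl
@[simp] lemma add_d (X Y : GenMatrix R s) : (X + Y).d = X.d + Y.d := rfl
@[simp] lemma neg_a (X : GenMatrix R s) : (-X).a = -X.a := rfl
@[simp] lemma neg_b (X : GenMatrix R s) : (-X).b = -X.b := rfl
@[simp] lemma neg_c (X : GenMatrix R s) : (-X).c = -X.c := rfl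
@[simp] lemma neg_d (X : GenMatrix R s) : (-X).d = -X.d := rfl
@[simp] lemma zero_a : (0 : GenMatrix R s).a = 0 := rfl
@[simp] lemma zero_b : (0 : GenMatrix R s).b = 0 := rfl
@[simp] lemma zero_c : (0 : GenMatrix R s).c = 0 := rfl
@[simp] lemma zero_d : (0 : GenMatrix R s).d = 0 := rfl
@[simp] lemma one_a : (1 : GenMatrix R s).a = 1 := rfl
@[simp] lemma one_b : (1 : GenMatrix R s).b = 0 := rfl
@[simp] lemma one_c : (1 : GenMatrix R s).c = 0 := rfl
@[simp] lemma one_d : (1 : GenMatrix R s).d = 1 := rfl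
@[simp] lemma mul_a (X Y : GenMatrix R s) : (X * Y).a = X.a * Y.a + s * (X.b * Y.c) := rfl
@[simp] lemma mul_b (X Y : GenMatrix R s) : (X * Y).b = X.a * Y.b + X.b * Y.d := rfl
@[simp] lemma mul_c (X Y : GenMatrix R s) : (X * Y).c = X.c * Y.a + X.d * Y.c := rfl
@[simp] lemma mul_d (X Y : GenMatrix R s) : (X * Y).d = s * (X.c * Y.b) + X.d * Y.d := rfl

instance : AddCommGroup (GenMatrix R s) where
  add_assoc X Y Z := by ext <;> simp [add_assoc]
  zero_add X := by ext <;> simp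
  add_zero X := by ext <;> simp
  add_comm X Y := by ext <;> simp [add_comm]
  neg_add_cancel X := by ext <;> simp
  nsmul := nsmulRec
  zsmul := zsmulRec

section Central

variable [Fact (s ∈ Set.center R)]

lemma scomm (r : R) : r * s = s * r := Semigroup.mem_center_iff.mp Fact.out r

lemma sshift (r t : R) : r * (s * t) = s * (r * t) := by
  rw [← mul_assoc, scomm (s := s), mul_assoc]

instance : Ring (GenMatrix R s) where
  __ := (inferInstance : AddCommGroup (GenMatrix R s))
  left_distrib X Y Z := by ext <;> simp [mul_add, add_mul] <;> abel
  right_distrib X Y Z := by ext <;> simp [mul_add, add_mul] <;> abel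
  zero_mul X := by ext <;> simp
  mul_zero X := by ext <;> simp
  mul_assoc X Y Z := by
    ext <;> simp only [mul_a, mul_b, mul_c, mul_d, mul_add, add_mul, mul_assoc, sshift] <;> abel
  one_mul X := by ext <;> simp
  mul_one X := by ext <;> simp

end Central

instance central_of_comm {R : Type*} [CommRing R] (s : R) : Fact (s ∈ Set.center R) :=
  ⟨by rw [Set.center_eq_univ]; trivial⟩

/-- `det_s` of a generalized matrix over a commutative ring. -/
def dets {R : Type*} {s : R} [CommRing R] (A : GenMatrix R s) : R :=
  A.a * A.d - s * (A.b * A.c)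

/-- The trace of a generalized matrix. -/
def tr {R : Type*} {s : R} [Ring R] (A : GenMatrix R s) : R := A.a + A.d

end GenMatrix

/-- An element `a` is quasinilpotent if `1 + a*x` is a unit for every `x` commuting with `a`. -/
def IsQuasinilpotent {R : Type*} [Ring R] (a : R) : Prop :=
  ∀ x : R, a * x = x * a → IsUnit (1 + a * x)

/-- An element `a` is quasipolar if there is an idempotent `p` in the double commutant of `a`
with `a + p` a unit and `a * p` quasinilpotent. -/
def IsQuasipolar {R : Type*} [Ring R] (a : R) : Prop :=
  ∃ p : R, IsIdempotentElem p ∧ (∀ y : R, y * a = a * y → p * y = y * p) ∧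
    IsUnit (a + p) ∧ IsQuasinilpotent (a * p)

/-- A ring is quasipolar if every element is quasipolar. -/
def IsQuasipolarRing (R : Type*) [Ring R] : Prop := ∀ a : R, IsQuasipolar a

/-- An element is strongly clean if it is the sum of an idempotent and a unit that commute. -/
def IsStronglyClean {R : Type*} [Ring R] (a : R) : Prop :=
  ∃ e u : R, IsIdempotentElem e ∧ IsUnit u ∧ a = e + u ∧ e * u = u * e

/-- A ring is strongly clean if every element is strongly clean. -/
def IsStronglyCleanRing (R : Type*) [Ring R] : Prop := ∀ a : R, IsStronglyClean a

/-- `a` is similar to `b` if `b = u⁻¹ * a * u` for some unit `u`. -/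
def IsSimilar {R : Type*} [Ring R] (a b : R) : Prop :=
  ∃ u : Rˣ, b = ↑u⁻¹ * a * ↑u

/-- The Jacobson radical of a ring: the intersection of all maximal left ideals. -/
def JacobsonRadical (R : Type*) [Ring R] : Ideal R := Ideal.jacobson ⊥


lemma genMatrix_dets_mul {R : Type*} [CommRing R] {s : R} (X Y : GenMatrix R s) :
    GenMatrix.dets (X * Y) = GenMatrix.dets X * GenMatrix.dets Y := by
  simp only [GenMatrix.dets, GenMatrix.mul_a, GenMatrix.mul_b, GenMatrix.mul_c, GenMatrix.mul_d]
  ring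

/-- `A` is a unit of `K_s(R)` iff `det_s(A)` is a unit of `R`; in that case,
if `v = det_s(A)⁻¹` then `v • [[d, -b], [-c, a]]` is the (two-sided) inverse of `A`. -/
theorem genMatrix_isUnit_iff_isUnit_dets {R : Type*} [CommRing R] (s : R)
    (A : GenMatrix R s) :
    (IsUnit A ↔ IsUnit (GenMatrix.dets A)) ∧
      (∀ v : R, v * GenMatrix.dets A = 1 →
        A * (⟨v * A.d, v * -A.b, v * -A.c, v * A.a⟩ : GenMatrix R s) = 1 ∧
        (⟨v * A.d, v * -A.b, v * -A.c, v * A.a⟩ : GenMatrix R s) * A = 1) := by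
  have key : ∀ v : R, v * GenMatrix.dets A = 1 →
      A * (⟨v * A.d, v * -A.b, v * -A.c, v * A.a⟩ : GenMatrix R s) = 1 ∧
      (⟨v * A.d, v * -A.b, v * -A.c, v * A.a⟩ : GenMatrix R s) * A = 1 := by
    intro v hv
    simp only [GenMatrix.dets] at hv
    constructor <;> ext <;>
      simp only [GenMatrix.mul_a, GenMatrix.mul_b, GenMatrix.mul_c, GenMatrix.mul_d,
        GenMatrix.one_a, GenMatrix.one_b, GenMatrix.one_c, GenMatrix.one_d] <;>
      first | linear_combination hv | ring
  refine ⟨⟨fun ⟨u, hu⟩ => ?_, fun h => ?_⟩, key⟩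
  · refine IsUnit.of_mul_eq_one (GenMatrix.dets (↑u⁻¹ : GenMatrix R s)) ?_
    rw [← genMatrix_dets_mul, ← hu, u.mul_inv]
    simp [GenMatrix.dets]
  · obtain ⟨u, hu⟩ := h
    have hv : (↑u⁻¹ : R) * GenMatrix.dets A = 1 := by rw [← hu]; exact u.inv_mul
    obtain ⟨h1, h2⟩ := key _ hv
    exact ⟨⟨A, _, h1, h2⟩, rfl⟩
end

section
/- Let R be a local ring and let s ∈ R be central, and let E be an idempotent of K_s(R) with E ≠ 0 and E ≠ I₂. Then: (1) if s is a unit of R, then E is similar in K_s(R) to the diagonal matrix [[1,0],[0,0]]; (2) if s ∈ J(R), then E is similar in K_s(R) to [[1,0],[0,0]] or to [[0,0],[0,1]]. -/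
section Aux

open GenMatrix

variable {R : Type*} [Ring R] {s : R} [Fact (s ∈ Set.center R)]

@[simp] lemma GM.sub_a (X Y : GenMatrix R s) : (X - Y).a = X.a - Y.a := by
  rw [sub_eq_add_neg, sub_eq_add_neg]; rfl
@[simp] lemma GM.sub_b (X Y : GenMatrix R s) : (X - Y).b = X.b - Y.b := by
  rw [sub_eq_add_neg, sub_eq_add_neg]; rfl
@[simp] lemma GM.sub_c (X Y : GenMatrix R s) : (X - Y).c = X.c - Y.c := by
  rw [sub_eq_add_neg, sub_eq_add_neg]; rfl
@[simp] lemma GM.sub_d (X Y : GenMatrix R s) : (X - Y).d = X.d - Y.d := by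
  rw [sub_eq_add_neg, sub_eq_add_neg]; rfl

lemma GM.unit_lower (x : R) : IsUnit (⟨1, 0, x, 1⟩ : GenMatrix R s) :=
  isUnit_iff_exists.mpr ⟨⟨1, 0, -x, 1⟩, by ext <;> simp, by ext <;> simp⟩

lemma GM.unit_tri (u v : Rˣ) (β : R) : IsUnit (⟨(u : R), β, 0, (v : R)⟩ : GenMatrix R s) :=
  isUnit_iff_exists.mpr ⟨⟨((u⁻¹ : Rˣ) : R), -((u⁻¹ : Rˣ) * β * ((v⁻¹ : Rˣ) : R)), 0,
      ((v⁻¹ : Rˣ) : R)⟩,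
    by ext <;> simp [mul_assoc], by ext <;> simp [mul_assoc]⟩

lemma GM.unit_schur (X : GenMatrix R s) (u : Rˣ) (hu : X.a = (u : R)) (v : Rˣ)
    (hv : X.d - s * (X.c * ((u⁻¹ : Rˣ) * X.b)) = (v : R)) : IsUnit X := by
  have hfac : X = (⟨1, 0, X.c * ((u⁻¹ : Rˣ) : R), 1⟩ : GenMatrix R s) * ⟨(u : R), X.b, 0, (v : R)⟩ := by
    ext <;> simp [hu, ← hv, mul_assoc]
  rw [hfac]
  exact (GM.unit_lower _).mul (GM.unit_tri u v X.b)

lemma GM.unit_of_sq {X : GenMatrix R s} (h : IsUnit (X * X)) : IsUnit X := by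
  obtain ⟨w, hw⟩ := h
  have hr : X * (X * (w⁻¹ : (GenMatrix R s)ˣ)) = 1 := by rw [← mul_assoc, ← hw, w.mul_inv]
  have hl : ((w⁻¹ : (GenMatrix R s)ˣ) * X) * X = 1 := by rw [mul_assoc, ← hw, w.inv_mul]
  have heq : ((w⁻¹ : (GenMatrix R s)ˣ) * X : GenMatrix R s) = X * (w⁻¹ : (GenMatrix R s)ˣ) := by
    calc ((w⁻¹ : (GenMatrix R s)ˣ) * X : GenMatrix R s)
        = ((w⁻¹ : (GenMatrix R s)ˣ) * X) * (X * (X * (w⁻¹ : (GenMatrix R s)ˣ))) := by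
          rw [hr, mul_one]
      _ = (((w⁻¹ : (GenMatrix R s)ˣ) * X) * X) * (X * (w⁻¹ : (GenMatrix R s)ˣ)) := by
          simp [mul_assoc]
      _ = X * (w⁻¹ : (GenMatrix R s)ˣ) := by rw [hl, one_mul]
  exact isUnit_iff_exists.mpr ⟨X * (w⁻¹ : (GenMatrix R s)ˣ), hr, by rw [← heq]; exact hl⟩

/-- The swap matrix as a unit, when `s` is a unit. -/
noncomputable def GM.wUnit (hs : IsUnit s) : (GenMatrix R s)ˣ where
  val := ⟨0, 1, 1, 0⟩
  inv := ⟨0, (hs.unit⁻¹ : Rˣ), (hs.unit⁻¹ : Rˣ), 0⟩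
  val_inv := by ext <;> simp [hs.mul_val_inv]
  inv_val := by ext <;> simp [hs.mul_val_inv]

lemma GM.similar_of_unit {E F U : GenMatrix R s} (hU : IsUnit U) (h : E * U = U * F) :
    IsSimilar E F := by
  obtain ⟨u, rfl⟩ := hU
  exact ⟨u, by rw [mul_assoc, h, ← mul_assoc, u.inv_mul, one_mul]⟩

lemma GM.similar_trans {E X Y : GenMatrix R s} (h1 : IsSimilar E X) (h2 : IsSimilar X Y) :
    IsSimilar E Y := by
  obtain ⟨u, hu⟩ := h1
  obtain ⟨v, hv⟩ := h2
  exact ⟨u * v, by rw [hv, hu]; simp [mul_assoc]⟩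

lemma GM.similar_e22_e11 (hs : IsUnit s) :
    IsSimilar (⟨0, 0, 0, 1⟩ : GenMatrix R s) (⟨1, 0, 0, 0⟩ : GenMatrix R s) := by
  refine GM.similar_of_unit (GM.wUnit hs).isUnit ?_
  show (⟨0,0,0,1⟩ : GenMatrix R s) * ⟨0,1,1,0⟩ = ⟨0,1,1,0⟩ * ⟨1,0,0,0⟩
  ext <;> simp

section Idem

variable {E : GenMatrix R s} (hE : E * E = E)

include hE

lemma GM.h1 : E.a * E.a + s * (E.b * E.c) = E.a := by
  have := congrArg GenMatrix.a hE; simpa using this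
lemma GM.h2 : E.a * E.b + E.b * E.d = E.b := by
  have := congrArg GenMatrix.b hE; simpa using this
lemma GM.h3 : E.c * E.a + E.d * E.c = E.c := by
  have := congrArg GenMatrix.c hE; simpa using this
lemma GM.h4 : s * (E.c * E.b) + E.d * E.d = E.d := by
  have := congrArg GenMatrix.d hE; simpa using this

/-- If `E.a` is a unit and `1 - E.d` is a unit, `E ∼ e₁₁`. -/
lemma GM.simB (u : Rˣ) (hu : E.a = (u : R)) (v : Rˣ) (hv : 1 - E.d = (v : R)) :
    IsSimilar E (⟨1, 0, 0, 0⟩ : GenMatrix R s) := by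
  have h1 := GM.h1 hE; have h2 := GM.h2 hE; have h3 := GM.h3 hE; have h4 := GM.h4 hE
  have e2 : E.a * E.b + E.b * (E.d - 1) = 0 := by
    have h : E.a * E.b + E.b * (E.d - 1) = (E.a * E.b + E.b * E.d) - E.b := by noncomm_ring
    rw [h, h2, sub_self]
  have e3 : E.c * E.a + (E.d - 1) * E.c = 0 := by
    have h : E.c * E.a + (E.d - 1) * E.c = (E.c * E.a + E.d * E.c) - E.c := by noncomm_ring
    rw [h, h3, sub_self]
  have hUU : (⟨E.a, E.b, E.c, E.d - 1⟩ : GenMatrix R s) * ⟨E.a, E.b, E.c, E.d - 1⟩ =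
      (⟨(u : R), 0, 0, (v : R)⟩ : GenMatrix R s) := by
    ext
    · show E.a * E.a + s * (E.b * E.c) = (u : R); rw [h1, hu]
    · exact e2
    · exact e3
    · show s * (E.c * E.b) + (E.d - 1) * (E.d - 1) = (v : R)
      have h : s * (E.c * E.b) + (E.d - 1) * (E.d - 1) =
          (s * (E.c * E.b) + E.d * E.d) - E.d + (1 - E.d) := by noncomm_ring
      rw [h, h4, sub_self, zero_add, hv]
  have hUunit : IsUnit (⟨E.a, E.b, E.c, E.d - 1⟩ : GenMatrix R s) :=
    GM.unit_of_sq (by rw [hUU]; exact GM.unit_tri u v 0)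
  refine GM.similar_of_unit hUunit ?_
  ext
  · show E.a * E.a + s * (E.b * E.c) = E.a * 1 + s * (E.b * 0); simpa using h1
  · show E.a * E.b + E.b * (E.d - 1) = E.a * 0 + E.b * 0; simpa using e2
  · show E.c * E.a + E.d * E.c = E.c * 1 + (E.d - 1) * 0; simpa using h3
  · show s * (E.c * E.b) + E.d * (E.d - 1) = s * (E.c * 0) + (E.d - 1) * 0
    have h : s * (E.c * E.b) + E.d * (E.d - 1) = (s * (E.c * E.b) + E.d * E.d) - E.d := by
      noncomm_ring
    rw [h, h4, sub_self]; simp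

/-- If `1 - E.a` is a unit and `E.d` is a unit, `E ∼ e₂₂`. -/
lemma GM.simA (u : Rˣ) (hu : 1 - E.a = (u : R)) (v : Rˣ) (hv : E.d = (v : R)) :
    IsSimilar E (⟨0, 0, 0, 1⟩ : GenMatrix R s) := by
  have h1 := GM.h1 hE; have h2 := GM.h2 hE; have h3 := GM.h3 hE; have h4 := GM.h4 hE
  have e1 : E.a * (E.a - 1) + s * (E.b * E.c) = 0 := by
    have h : E.a * (E.a - 1) + s * (E.b * E.c) = (E.a * E.a + s * (E.b * E.c)) - E.a := by
      noncomm_ring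
    rw [h, h1, sub_self]
  have e3 : E.c * (E.a - 1) + E.d * E.c = 0 := by
    have h : E.c * (E.a - 1) + E.d * E.c = (E.c * E.a + E.d * E.c) - E.c := by noncomm_ring
    rw [h, h3, sub_self]
  have hUU : (⟨E.a - 1, E.b, E.c, E.d⟩ : GenMatrix R s) * ⟨E.a - 1, E.b, E.c, E.d⟩ =
      (⟨(u : R), 0, 0, (v : R)⟩ : GenMatrix R s) := by
    ext
    · show (E.a - 1) * (E.a - 1) + s * (E.b * E.c) = (u : R)
      have h : (E.a - 1) * (E.a - 1) + s * (E.b * E.c) =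
          (E.a * E.a + s * (E.b * E.c)) - E.a + (1 - E.a) := by noncomm_ring
      rw [h, h1, sub_self, zero_add, hu]
    · show (E.a - 1) * E.b + E.b * E.d = 0
      have h : (E.a - 1) * E.b + E.b * E.d = (E.a * E.b + E.b * E.d) - E.b := by noncomm_ring
      rw [h, h2, sub_self]
    · exact e3
    · show s * (E.c * E.b) + E.d * E.d = (v : R); rw [h4, hv]
  have hUunit : IsUnit (⟨E.a - 1, E.b, E.c, E.d⟩ : GenMatrix R s) :=
    GM.unit_of_sq (by rw [hUU]; exact GM.unit_tri u v 0)
  refine GM.similar_of_unit hUunit ?_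
  ext
  · show E.a * (E.a - 1) + s * (E.b * E.c) = (E.a - 1) * 0 + s * (E.b * 0); simpa using e1
  · show E.a * E.b + E.b * E.d = (E.a - 1) * 0 + E.b * 1; simpa using h2
  · show E.c * (E.a - 1) + E.d * E.c = E.c * 0 + E.d * 0; simpa using e3
  · show s * (E.c * E.b) + E.d * E.d = s * (E.c * 0) + E.d * 1; simpa using h4

/-- If `s` and `E.b` are units, `E ∼ e₁₁`. -/
lemma GM.simD (hs : IsUnit s) (hb : IsUnit E.b) :
    IsSimilar E (⟨1, 0, 0, 0⟩ : GenMatrix R s) := by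
  have h1 := GM.h1 hE; have h2 := GM.h2 hE; have h3 := GM.h3 hE; have h4 := GM.h4 hE
  have hsb : IsUnit (s * E.b) := hs.mul hb
  have huv : ((hsb.unit : Rˣ) : R) = s * E.b := hsb.unit_spec
  have hkey : s * (((hsb.unit⁻¹ : Rˣ) : R) * E.b) = 1 := by
    calc s * (((hsb.unit⁻¹ : Rˣ) : R) * E.b)
        = (s * ((hsb.unit⁻¹ : Rˣ) : R)) * E.b := by rw [mul_assoc]
      _ = (((hsb.unit⁻¹ : Rˣ) : R) * s) * E.b := by
          rw [← GenMatrix.scomm (s := s) ((hsb.unit⁻¹ : Rˣ) : R)]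
      _ = ((hsb.unit⁻¹ : Rˣ) : R) * (s * E.b) := by rw [mul_assoc]
      _ = 1 := hsb.val_inv_mul
  have hUd : (⟨s * E.b, -E.b, E.d, 1 - E.d⟩ : GenMatrix R s).d -
      s * ((⟨s * E.b, -E.b, E.d, 1 - E.d⟩ : GenMatrix R s).c *
        (((hsb.unit⁻¹ : Rˣ) : R) * (⟨s * E.b, -E.b, E.d, 1 - E.d⟩ : GenMatrix R s).b)) =
      ((1 : Rˣ) : R) := by
    show (1 - E.d) - s * (E.d * (((hsb.unit⁻¹ : Rˣ) : R) * -E.b)) = 1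
    have h5 : s * (E.d * (((hsb.unit⁻¹ : Rˣ) : R) * -E.b)) =
        -(E.d * (s * (((hsb.unit⁻¹ : Rˣ) : R) * E.b))) := by
      rw [mul_neg, mul_neg, mul_neg, GenMatrix.sshift (s := s) E.d (((hsb.unit⁻¹ : Rˣ) : R) * E.b)]
    rw [h5, hkey, mul_one, sub_neg_eq_add, sub_add_cancel]
  have hUunit : IsUnit (⟨s * E.b, -E.b, E.d, 1 - E.d⟩ : GenMatrix R s) :=
    GM.unit_schur _ hsb.unit huv.symm 1 hUd
  refine GM.similar_of_unit hUunit ?_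
  ext
  · show E.a * (s * E.b) + s * (E.b * E.d) = (s * E.b) * 1 + s * (-E.b * 0)
    rw [GenMatrix.sshift (s := s) E.a E.b, ← mul_add, h2]; simp
  · show E.a * -E.b + E.b * (1 - E.d) = (s * E.b) * 0 + -E.b * 0
    have h : E.a * -E.b + E.b * (1 - E.d) = E.b - (E.a * E.b + E.b * E.d) := by noncomm_ring
    rw [h, h2, sub_self]; simp
  · show E.c * (s * E.b) + E.d * E.d = E.d * 1 + (1 - E.d) * 0
    rw [GenMatrix.sshift (s := s) E.c E.b, h4]; simp
  · show s * (E.c * -E.b) + E.d * (1 - E.d) = s * (E.d * 0) + (1 - E.d) * 0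
    have h : s * (E.c * -E.b) + E.d * (1 - E.d) = E.d - (s * (E.c * E.b) + E.d * E.d) := by
      rw [mul_neg, mul_neg]; noncomm_ring
    rw [h, h4, sub_self]; simp

/-- If `s` and `E.c` are units, `E ∼ e₁₁`. -/
lemma GM.simC (hs : IsUnit s) (hc : IsUnit E.c) :
    IsSimilar E (⟨1, 0, 0, 0⟩ : GenMatrix R s) := by
  have h1 := GM.h1 hE; have h2 := GM.h2 hE; have h3 := GM.h3 hE; have h4 := GM.h4 hE
  have hsc : IsUnit (s * E.c) := hs.mul hc
  have huv : ((hsc.unit : Rˣ) : R) = s * E.c := hsc.unit_spec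
  have hWU : ((GM.wUnit hs : (GenMatrix R s)ˣ) : GenMatrix R s) *
      (⟨E.a, 1 - E.a, E.c, -(s * E.c)⟩ : GenMatrix R s) =
      (⟨s * E.c, -(s * E.c), E.a, s * (1 - E.a)⟩ : GenMatrix R s) := by
    show (⟨0,1,1,0⟩ : GenMatrix R s) * ⟨E.a, 1 - E.a, E.c, -(s * E.c)⟩ =
      ⟨s * E.c, -(s * E.c), E.a, s * (1 - E.a)⟩
    ext <;> simp
  have hVd : (⟨s * E.c, -(s * E.c), E.a, s * (1 - E.a)⟩ : GenMatrix R s).d -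
      s * ((⟨s * E.c, -(s * E.c), E.a, s * (1 - E.a)⟩ : GenMatrix R s).c *
        (((hsc.unit⁻¹ : Rˣ) : R) * (⟨s * E.c, -(s * E.c), E.a, s * (1 - E.a)⟩ : GenMatrix R s).b)) =
      ((hs.unit : Rˣ) : R) := by
    show s * (1 - E.a) - s * (E.a * (((hsc.unit⁻¹ : Rˣ) : R) * -(s * E.c))) = s
    have hk : ((hsc.unit⁻¹ : Rˣ) : R) * (s * E.c) = 1 := hsc.val_inv_mul
    have h : E.a * (((hsc.unit⁻¹ : Rˣ) : R) * -(s * E.c)) = -E.a := by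
      rw [mul_neg, mul_neg, hk, mul_one]
    rw [h, mul_neg, sub_neg_eq_add, mul_sub, mul_one, sub_add_cancel]
  have hVunit : IsUnit (⟨s * E.c, -(s * E.c), E.a, s * (1 - E.a)⟩ : GenMatrix R s) :=
    GM.unit_schur _ hsc.unit huv.symm hs.unit hVd
  have hUunit : IsUnit (⟨E.a, 1 - E.a, E.c, -(s * E.c)⟩ : GenMatrix R s) := by
    have h2' : (⟨E.a, 1 - E.a, E.c, -(s * E.c)⟩ : GenMatrix R s) =
        ((GM.wUnit hs)⁻¹ : (GenMatrix R s)ˣ) *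
          (((GM.wUnit hs) : (GenMatrix R s)ˣ) * ⟨E.a, 1 - E.a, E.c, -(s * E.c)⟩) := by
      rw [← mul_assoc, Units.inv_mul, one_mul]
    rw [h2', hWU]
    exact ((GM.wUnit hs)⁻¹).isUnit.mul hVunit
  refine GM.similar_of_unit hUunit ?_
  ext
  · show E.a * E.a + s * (E.b * E.c) = E.a * 1 + s * ((1 - E.a) * 0); simpa using h1
  · show E.a * (1 - E.a) + E.b * -(s * E.c) = E.a * 0 + (1 - E.a) * 0
    have h : E.a * (1 - E.a) + E.b * -(s * E.c) = E.a - (E.a * E.a + s * (E.b * E.c)) := by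
      rw [mul_neg, GenMatrix.sshift (s := s) E.b E.c]; noncomm_ring
    rw [h, h1, sub_self]; simp
  · show E.c * E.a + E.d * E.c = E.c * 1 + -(s * E.c) * 0; simpa using h3
  · show s * (E.c * (1 - E.a)) + E.d * -(s * E.c) = s * (E.c * 0) + -(s * E.c) * 0
    have h : s * (E.c * (1 - E.a)) + E.d * -(s * E.c) = s * (E.c - (E.c * E.a + E.d * E.c)) := by
      rw [mul_neg, GenMatrix.sshift (s := s) E.d E.c, mul_sub, mul_sub, mul_sub]; noncomm_ring
    rw [h, h3, sub_self, mul_zero]; simp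

end Idem

end Aux

section LocalAux

variable {R : Type*} [Ring R] [IsLocalRing R]

lemma LR.or_one_sub (a : R) : IsUnit a ∨ IsUnit (1 - a) :=
  IsLocalRing.isUnit_or_isUnit_of_add_one (by abel)

lemma LR.mul_eq_one_comm {x z : R} (h : x * z = 1) : z * x = 1 := by
  have he : (z * x) * (z * x) = z * x := by
    rw [mul_assoc, ← mul_assoc x z x, h, one_mul]
  rcases IsLocalRing.isUnit_or_isUnit_of_add_one (a := z * x) (b := 1 - z * x) (by abel) with
    hu | hu
  · exact hu.mul_left_cancel (by rw [he, mul_one])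
  · exfalso
    have he' : (1 - z * x) * (1 - z * x) = 1 - z * x := by
      rw [sub_mul, one_mul, mul_sub, mul_one, he]; abel
    have h0 : z * x = 0 := by
      have h1 : (1 - z * x : R) = 1 := hu.mul_left_cancel (by rw [he', mul_one])
      have := sub_eq_self.mp h1; exact this
    have hz : z = 0 := by
      calc z = z * (x * z) := by rw [h, mul_one]
        _ = (z * x) * z := by rw [mul_assoc]
        _ = 0 := by rw [h0, zero_mul]
    have : (1 : R) = 0 := by rw [← h, hz, mul_zero]
    exact one_ne_zero this

lemma LR.isUnit_of_mul_left {x r : R} (h : IsUnit (x * r)) : IsUnit x := by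
  obtain ⟨w, hw⟩ := isUnit_iff_exists.mp h
  refine isUnit_iff_exists.mpr ⟨r * w, ?_, ?_⟩
  · rw [← mul_assoc]; exact hw.1
  · exact LR.mul_eq_one_comm (by rw [← mul_assoc]; exact hw.1)

lemma LR.isUnit_of_mul_right {x r : R} (h : IsUnit (r * x)) : IsUnit x := by
  obtain ⟨w, hw⟩ := isUnit_iff_exists.mp h
  have h1 : (w * r) * x = 1 := by rw [mul_assoc]; exact hw.2
  exact isUnit_iff_exists.mpr ⟨w * r, LR.mul_eq_one_comm h1, h1⟩

lemma LR.isUnit_add_split {x y : R} (h : IsUnit (x + y)) : IsUnit x ∨ IsUnit y := by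
  obtain ⟨w, hw⟩ := isUnit_iff_exists.mp h
  have : w * x + w * y = 1 := by rw [← mul_add]; exact hw.2
  rcases IsLocalRing.isUnit_or_isUnit_of_add_one this with hu | hu
  · exact Or.inl (LR.isUnit_of_mul_right hu)
  · exact Or.inr (LR.isUnit_of_mul_right hu)

lemma LR.unit_sub {u x : R} (hu : IsUnit u) (hx : ¬IsUnit x) : IsUnit (u - x) := by
  by_contra h
  have : u = (u - x) + x := by abel
  rcases LR.isUnit_add_split (this ▸ hu) with h' | h'
  · exact h h'
  · exact hx h'

lemma LR.one_sub_of_not {x : R} (hx : ¬IsUnit x) : IsUnit (1 - x) :=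
  (LR.or_one_sub x).resolve_left hx

lemma LR.jac_nonunit {x : R} (hx : x ∈ Ideal.jacobson (⊥ : Ideal R)) : ¬IsUnit x := by
  intro hu
  have h1 : (1 : R) ∈ Ideal.jacobson (⊥ : Ideal R) := by
    have := Ideal.mul_mem_left _ ((hu.unit⁻¹ : Rˣ) : R) hx
    rwa [hu.val_inv_mul] at this
  have h2 : Ideal.jacobson (⊥ : Ideal R) = ⊤ := (Ideal.eq_top_iff_one _).mpr h1
  have h3 : (⊥ : Ideal R) = ⊤ := Ideal.jacobson_eq_top_iff.mp h2
  have h4 : (1 : R) ∈ (⊥ : Ideal R) := h3.symm ▸ Submodule.mem_top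
  have h5 : (1 : R) = 0 := by simpa using h4
  exact one_ne_zero h5

end LocalAux

/-- if `R` is local with `s` central and `E` is a nontrivial idempotent of
`K_s(R)`, then (1) if `s` is a unit, `E` is similar to `[[1,0],[0,0]]`; (2) if `s ∈ J(R)`,
`E` is similar to `[[1,0],[0,0]]` or to `[[0,0],[0,1]]`. -/
theorem genMatrix_idempotent_similar_diagonal {R : Type*} [Ring R] [IsLocalRing R] (s : R)
    [Fact (s ∈ Set.center R)] (E : GenMatrix R s) (hE : IsIdempotentElem E)
    (hE0 : E ≠ 0) (hE1 : E ≠ 1) :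
    (IsUnit s → IsSimilar E (⟨1, 0, 0, 0⟩ : GenMatrix R s)) ∧
    (s ∈ JacobsonRadical R →
      IsSimilar E (⟨1, 0, 0, 0⟩ : GenMatrix R s) ∨
      IsSimilar E (⟨0, 0, 0, 1⟩ : GenMatrix R s)) := by
  have hEE : E * E = E := hE
  have h1 := GM.h1 hEE
  have h4 := GM.h4 hEE
  -- if E is a unit, E = 1
  have hEnotunit : ¬IsUnit E := by
    intro hu
    exact hE1 (hu.mul_left_cancel (by rw [hEE, mul_one]))
  have hFF : (1 - E) * (1 - E) = 1 - E := by
    rw [sub_mul, one_mul, mul_sub, mul_one, hEE]; abel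
  have hFnotunit : ¬IsUnit (1 - E) := by
    intro hu
    have : (1 : GenMatrix R s) - E = 1 := hu.mul_left_cancel (by rw [hFF, mul_one])
    exact hE0 (sub_eq_self.mp this)
  -- a helper: if E.a is a unit and s * anything is a nonunit, contradiction arises
  -- unless 1 - E.d is a unit.
  constructor
  · -- Part 1: s a unit
    intro hs
    by_cases hb : IsUnit E.b
    · exact GM.simD hEE hs hb
    by_cases hc : IsUnit E.c
    · exact GM.simC hEE hs hc
    rcases LR.or_one_sub E.a with ha | ha
    · rcases LR.or_one_sub E.d with hd | hd
      · -- a, d units: E would be a unit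
        exfalso
        apply hEnotunit
        have hschur : IsUnit (E.d - s * (E.c * (((ha.unit⁻¹ : Rˣ) : R) * E.b))) := by
          refine LR.unit_sub hd ?_
          intro hu
          exact hc (LR.isUnit_of_mul_left (LR.isUnit_of_mul_right hu))
        exact GM.unit_schur E ha.unit ha.unit_spec.symm hschur.unit hschur.unit_spec.symm
      · exact GM.simB hEE ha.unit ha.unit_spec.symm hd.unit hd.unit_spec.symm
    · rcases LR.or_one_sub E.d with hd | hd
      · exact GM.similar_trans (GM.simA hEE ha.unit ha.unit_spec.symm hd.unit hd.unit_spec.symm)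
          (GM.similar_e22_e11 hs)
      · -- 1 - a, 1 - d units: 1 - E would be a unit
        exfalso
        apply hFnotunit
        have hca : (1 - E).a = 1 - E.a := by simp
        have hschur : IsUnit ((1 - E).d - s * ((1 - E).c * (((ha.unit⁻¹ : Rˣ) : R) * (1 - E).b))) := by
          have hdd : (1 - E).d = 1 - E.d := by simp
          rw [hdd]
          refine LR.unit_sub hd ?_
          intro hu
          have hcc : ¬IsUnit ((1 - E).c) := by
            simp only [GM.sub_c, GenMatrix.one_c, zero_sub]
            intro h'
            exact hc (by simpa using h'.neg)
          exact hcc (LR.isUnit_of_mul_left (LR.isUnit_of_mul_right hu))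
        refine GM.unit_schur (1 - E) ha.unit ?_ hschur.unit hschur.unit_spec.symm
        rw [hca]; exact ha.unit_spec.symm
  · -- Part 2: s in the Jacobson radical
    intro hsJ
    have hs : ¬IsUnit s := LR.jac_nonunit hsJ
    rcases LR.or_one_sub E.a with ha | ha
    · rcases LR.or_one_sub E.d with hd | hd
      · exfalso
        apply hEnotunit
        have hschur : IsUnit (E.d - s * (E.c * (((ha.unit⁻¹ : Rˣ) : R) * E.b))) := by
          refine LR.unit_sub hd ?_
          intro hu
          exact hs (LR.isUnit_of_mul_left hu)
        exact GM.unit_schur E ha.unit ha.unit_spec.symm hschur.unit hschur.unit_spec.symm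
      · exact Or.inl (GM.simB hEE ha.unit ha.unit_spec.symm hd.unit hd.unit_spec.symm)
    · rcases LR.or_one_sub E.d with hd | hd
      · exact Or.inr (GM.simA hEE ha.unit ha.unit_spec.symm hd.unit hd.unit_spec.symm)
      · exfalso
        apply hFnotunit
        have hca : (1 - E).a = 1 - E.a := by simp
        have hschur : IsUnit ((1 - E).d - s * ((1 - E).c * (((ha.unit⁻¹ : Rˣ) : R) * (1 - E).b))) := by
          have hdd : (1 - E).d = 1 - E.d := by simp
          rw [hdd]
          refine LR.unit_sub hd ?_
          intro hu
          exact hs (LR.isUnit_of_mul_left hu)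
        refine GM.unit_schur (1 - E) ha.unit ?_ hschur.unit hschur.unit_spec.symm
        rw [hca]; exact ha.unit_spec.symm
end

section
/- Let R be a uniquely bleached local ring and let s ∈ R be central. A matrix A ∈ K_s(R) is quasipolar if and only if A is a unit of K_s(R), or A is quasinilpotent in K_s(R), or A is similar in K_s(R) to a diagonal matrix [[a,0],[0,b]] with a, b ∈ R. -/
/-- A local ring is uniquely bleached if for every `j ∈ J(R)` and every unit `u`, the maps
`x ↦ u*x - x*j` and `x ↦ j*x - x*u` are bijective. -/
def IsUniquelyBleached (R : Type*) [Ring R] : Prop :=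
  ∀ j ∈ JacobsonRadical R, ∀ u : R, IsUnit u →
    Function.Bijective (fun x : R => u * x - x * j) ∧
    Function.Bijective (fun x : R => j * x - x * u)

section LocalAux

variable {R : Type*} [Ring R] [IsLocalRing R]

lemma QPAux.isUnit_of_left_inv {a b : R} (h : b * a = 1) : IsUnit a := by
  rcases IsLocalRing.isUnit_or_isUnit_of_add_one (a := a * b) (b := 1 - a * b) (by abel) with he | he
  · have hab : a * b = 1 := by
      have hidem : (a * b) * (a * b) = (a * b) * 1 := by
        rw [mul_one, mul_assoc, ← mul_assoc b a, h, one_mul]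
      exact he.mul_left_cancel hidem
    exact ⟨⟨a, b, hab, h⟩, rfl⟩
  · exfalso
    have hee : (a * b) * (a * b) = a * b := by
      rw [mul_assoc, ← mul_assoc b a, h, one_mul]
    have hidem : (1 - a * b) * (1 - a * b) = (1 - a * b) * 1 := by
      rw [mul_one, mul_sub, sub_mul, sub_mul, one_mul, mul_one, hee]
      noncomm_ring
    have h0 : a * b = 0 := sub_eq_self.mp (he.mul_left_cancel hidem)
    have ha0 : a = 0 := by
      have : a * (b * a) = (a * b) * a := by rw [mul_assoc]
      rw [h, mul_one, h0, zero_mul] at this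
      exact this
    rw [ha0, mul_zero] at h
    exact one_ne_zero h.symm

lemma QPAux.isUnit_of_right_inv {a c : R} (h : a * c = 1) : IsUnit a := by
  have hc : IsUnit c := QPAux.isUnit_of_left_inv h
  have : a = ↑hc.unit⁻¹ := by
    have := congrArg (fun t => t * (↑hc.unit⁻¹ : R)) h
    simpa [mul_assoc, hc.mul_val_inv] using this
  rw [this]; exact Units.isUnit _

lemma QPAux.nonunit_mul_left {a : R} (h : ¬IsUnit a) (x : R) : ¬IsUnit (x * a) := by
  intro hu
  exact h (QPAux.isUnit_of_left_inv (a := a) (b := ↑hu.unit⁻¹ * x)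
    (by rw [mul_assoc]; exact hu.val_inv_mul))

lemma QPAux.nonunit_mul_right {a : R} (h : ¬IsUnit a) (x : R) : ¬IsUnit (a * x) := by
  intro hu
  exact h (QPAux.isUnit_of_right_inv (a := a) (c := x * ↑hu.unit⁻¹)
    (by rw [← mul_assoc]; exact hu.mul_val_inv))

lemma QPAux.isUnit_one_add {j : R} (h : ¬IsUnit j) : IsUnit (1 + j) := by
  rcases IsLocalRing.isUnit_or_isUnit_of_add_one (a := -j) (b := 1 - -j) (by abel) with hu | hu
  · exact absurd (by simpa using hu.neg) h
  · rwa [sub_neg_eq_add] at hu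

omit [IsLocalRing R] in
lemma QPAux.nonunit_neg {j : R} (h : ¬IsUnit j) : ¬IsUnit (-j) :=
  fun hu => h (by simpa using hu.neg)

lemma QPAux.isUnit_add_nonunit {u j : R} (hu : IsUnit u) (h : ¬IsUnit j) : IsUnit (u + j) := by
  have h2 : ¬IsUnit (↑hu.unit⁻¹ * j) := QPAux.nonunit_mul_left h _
  have : u + j = u * (1 + ↑hu.unit⁻¹ * j) := by
    rw [mul_add, mul_one, ← mul_assoc, hu.mul_val_inv, one_mul]
  rw [this]
  exact hu.mul (QPAux.isUnit_one_add h2)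

lemma QPAux.isUnit_one_sub {j : R} (h : ¬IsUnit j) : IsUnit (1 - j) := by
  rw [sub_eq_add_neg]
  exact QPAux.isUnit_add_nonunit isUnit_one (QPAux.nonunit_neg h)

lemma QPAux.isUnit_sub_nonunit {u j : R} (hu : IsUnit u) (h : ¬IsUnit j) : IsUnit (u - j) := by
  rw [sub_eq_add_neg]
  exact QPAux.isUnit_add_nonunit hu (QPAux.nonunit_neg h)

lemma QPAux.mem_jacobson_of_nonunit {a : R} (h : ¬IsUnit a) : a ∈ JacobsonRadical R := by
  rw [JacobsonRadical, Ideal.jacobson]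
  rw [Ideal.mem_sInf]
  rintro M ⟨-, hM⟩
  by_contra haM
  have hlt : M < M ⊔ Ideal.span {a} := by
    refine lt_of_le_of_ne le_sup_left (fun he => haM ?_)
    rw [he]
    exact Submodule.mem_sup_right (Submodule.mem_span_singleton_self a)
  have htop : M ⊔ Ideal.span {a} = ⊤ := hM.out.2 _ hlt
  have h1 : (1 : R) ∈ M ⊔ Ideal.span {a} := htop ▸ Submodule.mem_top
  obtain ⟨m, hm, z, hz, hmz⟩ := Submodule.mem_sup.mp h1
  obtain ⟨r, hr⟩ := Submodule.mem_span_singleton.mp hz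
  have hmnu : ¬IsUnit m := fun hum => hM.ne_top (M.eq_top_of_isUnit_mem hm hum)
  have hum : IsUnit (1 - m) := QPAux.isUnit_one_sub hmnu
  have hra : r * a = 1 - m := by
    rw [← hr, smul_eq_mul] at hmz
    rw [← hmz]; abel
  exact h (QPAux.isUnit_of_left_inv (a := a) (b := ↑hum.unit⁻¹ * r)
    (by rw [mul_assoc, hra]; exact hum.val_inv_mul))

end LocalAux
namespace QPAux

section GenAux

variable {R : Type*} [Ring R] {s : R} [Fact (s ∈ Set.center R)]

open GenMatrix

@[simp] lemma sub_a (X Y : GenMatrix R s) : (X - Y).a = X.a - Y.a := by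
  rw [sub_eq_add_neg, add_a, neg_a, ← sub_eq_add_neg]
@[simp] lemma sub_b (X Y : GenMatrix R s) : (X - Y).b = X.b - Y.b := by
  rw [sub_eq_add_neg, add_b, neg_b, ← sub_eq_add_neg]
@[simp] lemma sub_c (X Y : GenMatrix R s) : (X - Y).c = X.c - Y.c := by
  rw [sub_eq_add_neg, add_c, neg_c, ← sub_eq_add_neg]
@[simp] lemma sub_d (X Y : GenMatrix R s) : (X - Y).d = X.d - Y.d := by
  rw [sub_eq_add_neg, add_d, neg_d, ← sub_eq_add_neg]

/-- Lower triangular unit. -/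
def triL (l : R) : (GenMatrix R s)ˣ where
  val := ⟨1, 0, l, 1⟩
  inv := ⟨1, 0, -l, 1⟩
  val_inv := by ext <;> simp
  inv_val := by ext <;> simp

/-- Upper triangular unit. -/
def triU (m : R) : (GenMatrix R s)ˣ where
  val := ⟨1, m, 0, 1⟩
  inv := ⟨1, -m, 0, 1⟩
  val_inv := by ext <;> simp
  inv_val := by ext <;> simp

/-- Diagonal unit. -/
def diagU (u v : Rˣ) : (GenMatrix R s)ˣ where
  val := ⟨u, 0, 0, v⟩
  inv := ⟨↑u⁻¹, 0, 0, ↑v⁻¹⟩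
  val_inv := by ext <;> simp
  inv_val := by ext <;> simp

lemma LDM_val (l m : R) (u v : Rˣ) :
    ((triL l * diagU u v * triU m : (GenMatrix R s)ˣ) : GenMatrix R s) =
      ⟨↑u, ↑u * m, l * ↑u, s * ((l * ↑u) * m) + ↑v⟩ := by
  show ((⟨1, 0, l, 1⟩ * ⟨↑u, 0, 0, ↑v⟩ : GenMatrix R s) * ⟨1, m, 0, 1⟩ : GenMatrix R s) = _
  ext <;> simp

/-- Schur-type invertibility criterion. -/
lemma isUnit_of_schur (X : GenMatrix R s) (w : R) (h1 : w * X.a = 1) (h2 : X.a * w = 1)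
    (hδ : IsUnit (X.d - s * (X.c * (w * X.b)))) : IsUnit X := by
  have hXa : IsUnit X.a := ⟨⟨X.a, w, h2, h1⟩, rfl⟩
  have hU := LDM_val (s := s) (X.c * w) (w * X.b) hXa.unit hδ.unit
  rw [hXa.unit_spec, hδ.unit_spec] at hU
  have hval : ((triL (X.c * w) * diagU hXa.unit hδ.unit * triU (w * X.b) :
      (GenMatrix R s)ˣ) : GenMatrix R s) = X := by
    rw [hU]
    ext <;> simp
    · rw [← mul_assoc, h2, one_mul]
    · rw [mul_assoc, h1, mul_one]
    · rw [mul_assoc X.c w X.a, h1, mul_one, add_sub_cancel]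
  exact hval ▸ (triL (X.c * w) * diagU hXa.unit hδ.unit * triU (w * X.b)).isUnit

end GenAux

end QPAux
namespace QPAux

section GenAux2

variable {R : Type*} [Ring R] {s : R} [Fact (s ∈ Set.center R)]

open GenMatrix

/-- An idempotent with `p.a` a unit and `1 - p.d` a unit is similar to `E₁₁`. -/
lemma idem_sim (p : GenMatrix R s) (hp : p * p = p) (hu : IsUnit p.a) (hd : IsUnit (1 - p.d)) :
    ∃ U : (GenMatrix R s)ˣ, (↑U⁻¹ * p * ↑U : GenMatrix R s) = ⟨1, 0, 0, 0⟩ := by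
  have e1 : p.a * p.a + s * (p.b * p.c) = p.a := congrArg GenMatrix.a hp
  have e2 : p.a * p.b + p.b * p.d = p.b := congrArg GenMatrix.b hp
  have e3 : p.c * p.a + p.d * p.c = p.c := congrArg GenMatrix.c hp
  have e4 : s * (p.c * p.b) + p.d * p.d = p.d := congrArg GenMatrix.d hp
  set w : R := ↑hu.unit⁻¹ with hw
  set v : R := ↑hd.unit⁻¹ with hvdef
  have h1 : w * p.a = 1 := hu.val_inv_mul
  have h2 : p.a * w = 1 := hu.mul_val_inv
  have hv1 : v * (1 - p.d) = 1 := hd.val_inv_mul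
  have h3' : (1 - p.d) * p.c = p.c * p.a := by
    rw [sub_mul, one_mul, eq_sub_of_add_eq e3]
  have hcw : p.c * w = v * p.c := by
    have hc2 : (1 - p.d) * (p.c * w) = p.c := by
      calc (1 - p.d) * (p.c * w) = ((1 - p.d) * p.c) * w := (mul_assoc _ _ _).symm
        _ = (p.c * p.a) * w := by rw [h3']
        _ = p.c := by rw [mul_assoc, h2, mul_one]
    calc p.c * w = (v * (1 - p.d)) * (p.c * w) := by rw [hv1, one_mul]
      _ = v * ((1 - p.d) * (p.c * w)) := mul_assoc _ _ _
      _ = v * p.c := by rw [hc2]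
  have e4' : s * (p.c * p.b) = p.d - p.d * p.d := eq_sub_of_add_eq e4
  have K1 : s * (p.c * (w * p.b)) = p.d := by
    calc s * (p.c * (w * p.b)) = s * ((p.c * w) * p.b) := by rw [mul_assoc]
      _ = s * (v * (p.c * p.b)) := by rw [hcw, mul_assoc]
      _ = v * (s * (p.c * p.b)) := (GenMatrix.sshift v _).symm
      _ = v * ((1 - p.d) * p.d) := by rw [e4', sub_mul, one_mul]
      _ = p.d := by rw [← mul_assoc, hv1, one_mul]
  set U : (GenMatrix R s)ˣ := triL (p.c * w) * diagU hu.unit 1 * triU (-(w * p.b)) with hUdef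
  have hUval : (↑U : GenMatrix R s) = ⟨p.a, -p.b, p.c, 1 - p.d⟩ := by
    rw [hUdef, LDM_val, hu.unit_spec]
    refine GenMatrix.ext rfl ?_ ?_ ?_
    · show p.a * -(w * p.b) = -p.b
      rw [mul_neg, ← mul_assoc, h2, one_mul]
    · show (p.c * w) * p.a = p.c
      rw [mul_assoc, h1, mul_one]
    · show s * (((p.c * w) * p.a) * -(w * p.b)) + ↑(1 : Rˣ) = 1 - p.d
      rw [mul_assoc p.c w p.a, h1, mul_one, mul_neg, mul_neg, K1, Units.val_one]
      abel
  have hPU : p * (↑U : GenMatrix R s) = (↑U : GenMatrix R s) * ⟨1, 0, 0, 0⟩ := by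
    rw [hUval]
    refine GenMatrix.ext ?_ ?_ ?_ ?_
    · show p.a * p.a + s * (p.b * p.c) = p.a * 1 + s * (-p.b * 0)
      rw [e1, mul_one, mul_zero, mul_zero, add_zero]
    · show p.a * -p.b + p.b * (1 - p.d) = p.a * 0 + -p.b * 0
      have h : p.a * -p.b + p.b * (1 - p.d) = p.b - (p.a * p.b + p.b * p.d) := by noncomm_ring
      rw [h, e2, sub_self, mul_zero, mul_zero, add_zero]
    · show p.c * p.a + p.d * p.c = p.c * 1 + (1 - p.d) * 0
      rw [e3, mul_one, mul_zero, add_zero]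
    · show s * (p.c * -p.b) + p.d * (1 - p.d) = s * (p.c * 0) + (1 - p.d) * 0
      have h : s * (p.c * -p.b) + p.d * (1 - p.d) = (p.d - p.d * p.d) - s * (p.c * p.b) := by
        noncomm_ring
      rw [h, e4', sub_self, mul_zero, mul_zero, mul_zero, add_zero]
  refine ⟨U, ?_⟩
  rw [mul_assoc, hPU, ← mul_assoc, U.inv_mul, one_mul]

end GenAux2

section GenAux3

variable {R : Type*} [Ring R] [IsLocalRing R] {s : R} [Fact (s ∈ Set.center R)]

open GenMatrix

lemma idem_eq_zero (hR : IsUniquelyBleached R) (p : GenMatrix R s) (hp : p * p = p)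
    (ha : ¬IsUnit p.a) (hd : ¬IsUnit p.d) : p = 0 := by
  have e1 : p.a * p.a + s * (p.b * p.c) = p.a := congrArg GenMatrix.a hp
  have e2 : p.a * p.b + p.b * p.d = p.b := congrArg GenMatrix.b hp
  have e3 : p.c * p.a + p.d * p.c = p.c := congrArg GenMatrix.c hp
  have e4 : s * (p.c * p.b) + p.d * p.d = p.d := congrArg GenMatrix.d hp
  have hud : IsUnit (1 - p.d) := isUnit_one_sub hd
  have hua : IsUnit (1 - p.a) := isUnit_one_sub ha
  have hb0 : p.b = 0 := by
    apply (hR p.a (mem_jacobson_of_nonunit ha) (1 - p.d) hud).2.injective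
    show p.a * p.b - p.b * (1 - p.d) = p.a * 0 - 0 * (1 - p.d)
    have h : p.a * p.b - p.b * (1 - p.d) = (p.a * p.b + p.b * p.d) - p.b := by noncomm_ring
    rw [h, e2, sub_self, mul_zero, zero_mul, sub_self]
  have hc0 : p.c = 0 := by
    apply (hR p.d (mem_jacobson_of_nonunit hd) (1 - p.a) hua).2.injective
    show p.d * p.c - p.c * (1 - p.a) = p.d * 0 - 0 * (1 - p.a)
    have h : p.d * p.c - p.c * (1 - p.a) = (p.c * p.a + p.d * p.c) - p.c := by noncomm_ring
    rw [h, e3, sub_self, mul_zero, zero_mul, sub_self]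
  have haa : p.a * p.a = p.a := by
    rw [hb0, zero_mul, mul_zero, add_zero] at e1; exact e1
  have hdd : p.d * p.d = p.d := by
    rw [hc0, zero_mul, mul_zero, zero_add] at e4; exact e4
  have ha0 : p.a = 0 := by
    have h0 : p.a * (1 - p.a) = 0 := by rw [mul_sub, mul_one, haa, sub_self]
    have := congrArg (fun t => t * (↑hua.unit⁻¹ : R)) h0
    simpa [mul_assoc, hua.mul_val_inv] using this
  have hd0 : p.d = 0 := by
    have h0 : p.d * (1 - p.d) = 0 := by rw [mul_sub, mul_one, hdd, sub_self]
    have := congrArg (fun t => t * (↑hud.unit⁻¹ : R)) h0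
    simpa [mul_assoc, hud.mul_val_inv] using this
  ext <;> simp [ha0, hb0, hc0, hd0]

omit [IsLocalRing R] in
lemma isUnit_diag {a b : R} (ha : IsUnit a) (hb : IsUnit b) :
    IsUnit (⟨a, 0, 0, b⟩ : GenMatrix R s) := by
  have h : ((diagU ha.unit hb.unit : (GenMatrix R s)ˣ) : GenMatrix R s) = ⟨a, 0, 0, b⟩ := by
    show (⟨↑ha.unit, 0, 0, ↑hb.unit⟩ : GenMatrix R s) = _
    rw [ha.unit_spec, hb.unit_spec]
  exact h ▸ (diagU ha.unit hb.unit).isUnit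

lemma qnil_diag {a b : R} (ha : ¬IsUnit a) (hb : ¬IsUnit b) :
    IsQuasinilpotent (⟨a, 0, 0, b⟩ : GenMatrix R s) := by
  intro X _
  have hXa : IsUnit ((1 + (⟨a, 0, 0, b⟩ : GenMatrix R s) * X).a) := by
    show IsUnit (1 + (a * X.a + s * (0 * X.c)))
    rw [zero_mul, mul_zero, add_zero]
    exact isUnit_one_add (nonunit_mul_right ha _)
  refine isUnit_of_schur _ (↑hXa.unit⁻¹) hXa.val_inv_mul hXa.mul_val_inv ?_
  have hb' : (1 + (⟨a, 0, 0, b⟩ : GenMatrix R s) * X).b = a * X.b := by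
    show 0 + (a * X.b + 0 * X.d) = a * X.b
    rw [zero_mul, add_zero, zero_add]
  have hc' : (1 + (⟨a, 0, 0, b⟩ : GenMatrix R s) * X).c = b * X.c := by
    show 0 + (0 * X.a + b * X.c) = b * X.c
    rw [zero_mul, zero_add, zero_add]
  have hd' : (1 + (⟨a, 0, 0, b⟩ : GenMatrix R s) * X).d = 1 + b * X.d := by
    show 1 + (s * (0 * X.b) + b * X.d) = 1 + b * X.d
    rw [zero_mul, mul_zero, zero_add]
  rw [hb', hc', hd']
  exact isUnit_sub_nonunit (isUnit_one_add (nonunit_mul_right hb _))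
    (nonunit_mul_left (nonunit_mul_right (nonunit_mul_right hb _) _) _)

lemma quasipolar_diag (hR : IsUniquelyBleached R) (a b : R) :
    IsQuasipolar (⟨a, 0, 0, b⟩ : GenMatrix R s) := by
  by_cases ha : IsUnit a <;> by_cases hb : IsUnit b
  · -- both units : p = 0
    refine ⟨0, by simp [IsIdempotentElem], fun y _ => by rw [zero_mul, mul_zero], ?_, ?_⟩
    · rw [add_zero]; exact isUnit_diag ha hb
    · rw [mul_zero]; intro x _; rw [zero_mul, add_zero]; exact isUnit_one
  · -- a unit, b nonunit : p = E₂₂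
    refine ⟨⟨0, 0, 0, 1⟩, by show ((⟨0,0,0,1⟩ : GenMatrix R s) * ⟨0,0,0,1⟩) = _; ext <;> simp,
      ?_, ?_, ?_⟩
    · intro y hy
      have hyb : y.b * b = a * y.b := by
        have := congrArg GenMatrix.b hy; simpa using this
      have hyc : y.c * a = b * y.c := by
        have := congrArg GenMatrix.c hy; simpa using this
      have hb0 : y.b = 0 := (hR b (mem_jacobson_of_nonunit hb) a ha).1.injective
        (by simp [hyb])
      have hc0 : y.c = 0 := (hR b (mem_jacobson_of_nonunit hb) a ha).2.injective
        (by simp [hyc])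
      ext <;> simp [hb0, hc0]
    · have heq : (⟨a, 0, 0, b⟩ : GenMatrix R s) + ⟨0, 0, 0, 1⟩ = ⟨a, 0, 0, b + 1⟩ := by
        ext <;> simp
      rw [heq]
      exact isUnit_diag ha (by rw [add_comm]; exact isUnit_one_add hb)
    · have heq : (⟨a, 0, 0, b⟩ : GenMatrix R s) * ⟨0, 0, 0, 1⟩ = ⟨0, 0, 0, b⟩ := by
        ext <;> simp
      rw [heq]
      exact qnil_diag not_isUnit_zero hb
  · -- a nonunit, b unit : p = E₁₁
    refine ⟨⟨1, 0, 0, 0⟩, by show ((⟨1,0,0,0⟩ : GenMatrix R s) * ⟨1,0,0,0⟩) = _; ext <;> simp,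
      ?_, ?_, ?_⟩
    · intro y hy
      have hyb : y.b * b = a * y.b := by
        have := congrArg GenMatrix.b hy; simpa using this
      have hyc : y.c * a = b * y.c := by
        have := congrArg GenMatrix.c hy; simpa using this
      have hb0 : y.b = 0 := (hR a (mem_jacobson_of_nonunit ha) b hb).2.injective
        (by simp [hyb])
      have hc0 : y.c = 0 := (hR a (mem_jacobson_of_nonunit ha) b hb).1.injective
        (by simp [hyc])
      ext <;> simp [hb0, hc0]
    · have heq : (⟨a, 0, 0, b⟩ : GenMatrix R s) + ⟨1, 0, 0, 0⟩ = ⟨a + 1, 0, 0, b⟩ := by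
        ext <;> simp
      rw [heq]
      exact isUnit_diag (by rw [add_comm]; exact isUnit_one_add ha) hb
    · have heq : (⟨a, 0, 0, b⟩ : GenMatrix R s) * ⟨1, 0, 0, 0⟩ = ⟨a, 0, 0, 0⟩ := by
        ext <;> simp
      rw [heq]
      exact qnil_diag ha not_isUnit_zero
  · -- both nonunits : p = 1
    refine ⟨1, by simp [IsIdempotentElem], fun y _ => by rw [one_mul, mul_one], ?_, ?_⟩
    · have heq : (⟨a, 0, 0, b⟩ : GenMatrix R s) + 1 = ⟨a + 1, 0, 0, b + 1⟩ := by
        ext <;> simp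
      rw [heq]
      exact isUnit_diag (by rw [add_comm]; exact isUnit_one_add ha)
        (by rw [add_comm]; exact isUnit_one_add hb)
    · rw [mul_one]; exact qnil_diag ha hb

lemma idem_sim_diag (hR : IsUniquelyBleached R) (p : GenMatrix R s) (hp : p * p = p)
    (h0 : p ≠ 0) (h1 : p ≠ 1) :
    ∃ U : (GenMatrix R s)ˣ, (↑U⁻¹ * p * ↑U : GenMatrix R s) = ⟨1, 0, 0, 0⟩ ∨
      (↑U⁻¹ * p * ↑U : GenMatrix R s) = ⟨0, 0, 0, 1⟩ := by
  have hq : (1 - p) * (1 - p) = 1 - p := by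
    rw [mul_sub, mul_one, sub_mul, one_mul, hp]
    abel
  have conjq : ∀ U : (GenMatrix R s)ˣ,
      (↑U⁻¹ * (1 - p) * ↑U : GenMatrix R s) = ⟨1, 0, 0, 0⟩ →
      (↑U⁻¹ * p * ↑U : GenMatrix R s) = ⟨0, 0, 0, 1⟩ := by
    intro U hU
    have key : (↑U⁻¹ * (1 - p) * ↑U : GenMatrix R s) = 1 - ↑U⁻¹ * p * ↑U := by
      rw [mul_sub, mul_one, sub_mul, U.inv_mul]
    rw [hU] at key
    have h2 : (↑U⁻¹ * p * ↑U : GenMatrix R s) = 1 - ⟨1, 0, 0, 0⟩ := by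
      rw [key, sub_sub_cancel]
    rw [h2]
    ext <;> simp
  by_cases ha : IsUnit p.a
  · by_cases hd : IsUnit (1 - p.d)
    · obtain ⟨U, hU⟩ := idem_sim p hp ha hd
      exact ⟨U, Or.inl hU⟩
    · by_cases ha' : IsUnit (1 - p.a)
      · have hqa : IsUnit ((1 - p).a) := by simpa using ha'
        have hqd : IsUnit (1 - (1 - p).d) := by
          simp only [sub_d, one_d, sub_sub_cancel]
          rcases IsLocalRing.isUnit_or_isUnit_of_add_one (a := p.d) (b := 1 - p.d)
            (by abel) with h | h
          · exact h
          · exact absurd h hd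
        obtain ⟨U, hU⟩ := idem_sim (1 - p) hq hqa hqd
        exact ⟨U, Or.inr (conjq U hU)⟩
      · exfalso
        apply h1
        have hz := idem_eq_zero hR (1 - p) hq (by simpa using ha') (by simpa using hd)
        rw [← sub_sub_cancel 1 p, hz, sub_zero]
  · by_cases hd : IsUnit p.d
    · have hqa : IsUnit ((1 - p).a) := by
        simp only [sub_a, one_a]
        exact isUnit_one_sub ha
      have hqd : IsUnit (1 - (1 - p).d) := by
        simp only [sub_d, one_d, sub_sub_cancel]
        exact hd
      obtain ⟨U, hU⟩ := idem_sim (1 - p) hq hqa hqd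
      exact ⟨U, Or.inr (conjq U hU)⟩
    · exact absurd (idem_eq_zero hR p hp ha hd) h0

end GenAux3

end QPAux
namespace QPAux

section Transfer

variable {T : Type*} [Ring T]

lemma qnil_conj {x : T} (u : Tˣ) (h : IsQuasinilpotent x) :
    IsQuasinilpotent (↑u * x * ↑u⁻¹) := by
  intro z hz
  have hz' : x * (↑u⁻¹ * z * ↑u) = (↑u⁻¹ * z * ↑u) * x := by
    have := congrArg (fun t => (↑u⁻¹ : T) * t * ↑u) hz
    simp only [mul_assoc, Units.inv_mul_cancel_left, Units.mul_inv_cancel_left,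
      Units.inv_mul, Units.mul_inv, mul_one] at this
    simp only [mul_assoc]
    exact this
  have hu := h _ hz'
  have h2 : (1 : T) + ↑u * x * ↑u⁻¹ * z = ↑u * (1 + x * (↑u⁻¹ * z * ↑u)) * ↑u⁻¹ := by
    rw [mul_add, add_mul, mul_one]
    simp only [mul_assoc, Units.mul_inv_cancel_left, Units.inv_mul_cancel_left,
      Units.mul_inv, mul_one]
  rw [h2]
  exact (u.isUnit.mul hu).mul u⁻¹.isUnit

lemma quasipolar_of_similar {x y : T} (hs : IsSimilar x y) (hy : IsQuasipolar y) :
    IsQuasipolar x := by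
  obtain ⟨u, hu⟩ := hs
  subst hu
  obtain ⟨p, hidem, hcomm, hunit, hqn⟩ := hy
  refine ⟨↑u * p * ↑u⁻¹, ?_, ?_, ?_, ?_⟩
  · show (↑u * p * ↑u⁻¹) * (↑u * p * ↑u⁻¹) = ↑u * p * ↑u⁻¹
    have hpp : p * p = p := hidem
    simp only [mul_assoc, Units.inv_mul_cancel_left]
    rw [← mul_assoc p p, hpp]
  · intro z hz
    have hz' : (↑u⁻¹ * z * ↑u) * (↑u⁻¹ * x * ↑u) = (↑u⁻¹ * x * ↑u) * (↑u⁻¹ * z * ↑u) := by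
      simp only [mul_assoc, Units.mul_inv_cancel_left]
      rw [← mul_assoc z x, hz, mul_assoc]
    have := congrArg (fun t => (↑u : T) * t * ↑u⁻¹) (hcomm _ hz')
    simp only [mul_assoc, Units.mul_inv_cancel_left, Units.inv_mul_cancel_left,
      Units.mul_inv, mul_one] at this
    simp only [mul_assoc]
    exact this
  · have h2 : x + ↑u * p * ↑u⁻¹ = ↑u * ((↑u⁻¹ * x * ↑u) + p) * ↑u⁻¹ := by
      rw [mul_add, add_mul]
      simp only [mul_assoc, Units.mul_inv_cancel_left, Units.inv_mul_cancel_left,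
        Units.mul_inv, mul_one]
    rw [h2]
    exact (u.isUnit.mul hunit).mul u⁻¹.isUnit
  · have h2 : x * (↑u * p * ↑u⁻¹) = ↑u * ((↑u⁻¹ * x * ↑u) * p) * ↑u⁻¹ := by
      simp only [mul_assoc, Units.mul_inv_cancel_left]
    rw [h2]
    exact qnil_conj u hqn

end Transfer

end QPAux
/-- over a uniquely bleached local ring `R` with `s` central, `A ∈ K_s(R)` is
quasipolar iff `A` is a unit, or `A` is quasinilpotent, or `A` is similar to a diagonal
matrix `[[a,0],[0,b]]`. -/
theorem genMatrix_isQuasipolar_iff_unit_or_qnil_or_similar_diagonal {R : Type*} [Ring R]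
    [IsLocalRing R] (hR : IsUniquelyBleached R) (s : R) [Fact (s ∈ Set.center R)]
    (A : GenMatrix R s) :
    IsQuasipolar A ↔
      IsUnit A ∨ IsQuasinilpotent A ∨
        ∃ a b : R, IsSimilar A (⟨a, 0, 0, b⟩ : GenMatrix R s) := by
  constructor
  · rintro ⟨p, hidem, hcomm, hunit, hqn⟩
    by_cases hp0 : p = 0
    · subst hp0
      left
      rwa [add_zero] at hunit
    by_cases hp1 : p = 1
    · subst hp1
      right; left
      rwa [mul_one] at hqn
    right; right
    have hpA : p * A = A * p := hcomm A rfl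
    obtain ⟨U, hU⟩ := QPAux.idem_sim_diag hR p hidem hp0 hp1
    set B : GenMatrix R s := ↑U⁻¹ * A * ↑U with hBdef
    have hEB : (↑U⁻¹ * p * ↑U : GenMatrix R s) * B = B * (↑U⁻¹ * p * ↑U) := by
      rw [hBdef]
      simp only [mul_assoc, Units.mul_inv_cancel_left]
      rw [← mul_assoc p A, hpA, mul_assoc]
    rcases hU with h | h
    · rw [h] at hEB
      have h1 : B.b = 0 := by
        have := congrArg GenMatrix.b hEB
        simpa using this
      have h2 : B.c = 0 := by
        have := congrArg GenMatrix.c hEB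
        simpa using this.symm
      refine ⟨B.a, B.d, U, ?_⟩
      rw [← hBdef]
      exact (GenMatrix.ext rfl h1.symm h2.symm rfl : (⟨B.a, 0, 0, B.d⟩ : GenMatrix R s) = B)
    · rw [h] at hEB
      have h1 : B.b = 0 := by
        have := congrArg GenMatrix.b hEB
        simpa using this.symm
      have h2 : B.c = 0 := by
        have := congrArg GenMatrix.c hEB
        simpa using this
      refine ⟨B.a, B.d, U, ?_⟩
      rw [← hBdef]
      exact (GenMatrix.ext rfl h1.symm h2.symm rfl : (⟨B.a, 0, 0, B.d⟩ : GenMatrix R s) = B)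
  · rintro (h | h | ⟨a, b, hsim⟩)
    · refine ⟨0, by simp [IsIdempotentElem], fun y _ => by rw [zero_mul, mul_zero], ?_, ?_⟩
      · rwa [add_zero]
      · rw [mul_zero]
        intro x _
        rw [zero_mul, add_zero]
        exact isUnit_one
    · refine ⟨1, IsIdempotentElem.one, fun y _ => by rw [one_mul, mul_one], ?_, ?_⟩
      · have := h 1 (by rw [mul_one, one_mul])
        rwa [mul_one, add_comm] at this
      · rwa [mul_one]
    · exact QPAux.quasipolar_of_similar hsim (QPAux.quasipolar_diag hR a b)
end

section
/- Let R be a local ring and let s ∈ J(R) be central. If A ∈ K_s(R) is neither a unit of K_s(R) nor quasinilpotent in K_s(R), then A is similar in K_s(R) to a matrix [[u,1],[v,w]] or to a matrix [[w,1],[v,u]], where u, v ∈ U(R) and w ∈ J(R). -/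
section AuxJac

variable {R : Type*} [Ring R]

lemma aux_mem_jac_iff {x : R} :
    x ∈ JacobsonRadical R ↔ ∀ y : R, ∃ z : R, z * y * x + z - 1 = 0 := by
  unfold JacobsonRadical
  rw [Ideal.mem_jacobson_iff]
  simp [Ideal.mem_bot]

lemma aux_jac_mul_right {x : R} (hx : x ∈ JacobsonRadical R) (r : R) :
    x * r ∈ JacobsonRadical R := by
  unfold JacobsonRadical at hx ⊢
  exact Ideal.mul_mem_right r _ hx

lemma aux_jac_mul_left (r : R) {x : R} (hx : x ∈ JacobsonRadical R) :
    r * x ∈ JacobsonRadical R := Ideal.mul_mem_left _ r hx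

lemma aux_isUnit_one_add {x : R} (hx : x ∈ JacobsonRadical R) : IsUnit (1 + x) := by
  obtain ⟨z, hz⟩ := aux_mem_jac_iff.mp hx 1
  rw [mul_one, sub_eq_zero] at hz
  have hz1 : z * (1 + x) = 1 := by rw [mul_add, mul_one, add_comm]; exact hz
  have hz2 : z - 1 ∈ JacobsonRadical R := by
    have h4 : z - 1 = -(z * x) := by rw [sub_eq_iff_eq_add, ← hz]; abel
    rw [h4]
    exact neg_mem (aux_jac_mul_left z hx)
  obtain ⟨z', hz'⟩ := aux_mem_jac_iff.mp hz2 1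
  rw [mul_one, sub_eq_zero] at hz'
  have hz'1 : z' * z = 1 := by
    have h5 : z' * z = z' * (z - 1) + z' := by noncomm_ring
    rw [h5]; exact hz'
  have hzx : z' = 1 + x := by
    calc z' = z' * (z * (1 + x)) := by rw [hz1, mul_one]
    _ = z' * z * (1 + x) := by rw [mul_assoc]
    _ = 1 + x := by rw [hz'1, one_mul]
  exact ⟨⟨1 + x, z, by rw [← hzx]; exact hz'1, hz1⟩, rfl⟩

lemma aux_isUnit_add {a x : R} (ha : IsUnit a) (hx : x ∈ JacobsonRadical R) :
    IsUnit (a + x) := by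
  obtain ⟨u, hu⟩ := ha
  have h1 : IsUnit (1 + ↑u⁻¹ * x) := aux_isUnit_one_add (aux_jac_mul_left _ hx)
  have h2 : a + x = ↑u * (1 + ↑u⁻¹ * x) := by
    rw [mul_add, mul_one, Units.mul_inv_cancel_left, hu]
  rw [h2]
  exact u.isUnit.mul h1

lemma aux_isUnit_of_left_inv [IsLocalRing R] {a b : R} (h : b * a = 1) : IsUnit a := by
  rcases IsLocalRing.isUnit_or_isUnit_of_add_one (show a * b + (1 - a * b) = 1 by noncomm_ring) with h1 | h1
  · obtain ⟨u, hu⟩ := h1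
    have hac : a * (b * ↑u⁻¹) = 1 := by rw [← mul_assoc, ← hu, Units.mul_inv]
    have hbc : b = b * ↑u⁻¹ := by
      calc b = b * (a * (b * ↑u⁻¹)) := by rw [hac, mul_one]
      _ = b * a * (b * ↑u⁻¹) := by rw [mul_assoc]
      _ = b * ↑u⁻¹ := by rw [h, one_mul]
    exact ⟨⟨a, b, by rw [hbc]; exact hac, h⟩, rfl⟩
  · obtain ⟨u, hu⟩ := h1
    have h2 : ↑u * a = 0 := by
      rw [hu, sub_mul, one_mul, mul_assoc, h, mul_one, sub_self]
    have ha0 : a = 0 := by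
      calc a = ↑u⁻¹ * (↑u * a) := (Units.inv_mul_cancel_left u a).symm
      _ = 0 := by rw [h2, mul_zero]
    rw [ha0, mul_zero] at h
    exact absurd h zero_ne_one

lemma aux_mem_jac_of_not_isUnit [IsLocalRing R] {a : R} (ha : ¬IsUnit a) :
    a ∈ JacobsonRadical R := by
  unfold JacobsonRadical Ideal.jacobson
  refine Ideal.mem_sInf.mpr fun {M} hM => ?_
  obtain ⟨-, hMmax⟩ := hM
  by_contra haM
  obtain ⟨y, i, hi, hyi⟩ := hMmax.exists_inv haM
  rcases IsLocalRing.isUnit_or_isUnit_of_add_one hyi with h1 | h2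
  · obtain ⟨u, hu⟩ := h1
    have h3 : (↑u⁻¹ * y) * a = 1 := by rw [mul_assoc, ← hu, Units.inv_mul]
    exact ha (aux_isUnit_of_left_inv h3)
  · exact hMmax.ne_top (M.eq_top_of_isUnit_mem hi h2)

end AuxJac

namespace GenMatrix

section Key

variable {R : Type*} [Ring R] {s : R} [Fact (s ∈ Set.center R)]

lemma aux_smul_mem (hs : s ∈ JacobsonRadical R) (r : R) : s * r ∈ JacobsonRadical R := by
  rw [← scomm r]
  exact aux_jac_mul_left r hs

lemma aux_isUnit_lower (m : R) : IsUnit (⟨1, 0, m, 1⟩ : GenMatrix R s) :=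
  ⟨⟨⟨1, 0, m, 1⟩, ⟨1, 0, -m, 1⟩, by ext <;> simp, by ext <;> simp⟩, rfl⟩

lemma aux_isUnit_upper (p q : Rˣ) (b : R) : IsUnit (⟨↑p, b, 0, ↑q⟩ : GenMatrix R s) :=
  ⟨⟨⟨↑p, b, 0, ↑q⟩, ⟨↑p⁻¹, -(↑p⁻¹ * b * ↑q⁻¹), 0, ↑q⁻¹⟩,
    by ext <;> simp [← mul_assoc],
    by ext <;> simp [← mul_assoc]⟩, rfl⟩

lemma aux_isUnit_of_diag (hs : s ∈ JacobsonRadical R) {X : GenMatrix R s}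
    (ha : IsUnit X.a) (hd : IsUnit X.d) : IsUnit X := by
  obtain ⟨p, hp⟩ := ha
  have hδ : IsUnit (X.d - s * (X.c * ↑p⁻¹ * X.b)) := by
    rw [sub_eq_add_neg]
    exact aux_isUnit_add hd (neg_mem (aux_smul_mem hs _))
  obtain ⟨q, hq⟩ := hδ
  have hfact : X = (⟨1, 0, X.c * ↑p⁻¹, 1⟩ : GenMatrix R s) * ⟨↑p, X.b, 0, ↑q⟩ := by
    ext
    · show X.a = 1 * ↑p + s * (0 * 0)
      rw [hp]; noncomm_ring
    · show X.b = 1 * X.b + 0 * ↑q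
      noncomm_ring
    · show X.c = X.c * ↑p⁻¹ * ↑p + 1 * 0
      rw [Units.inv_mul_cancel_right]; noncomm_ring
    · show X.d = s * (X.c * ↑p⁻¹ * X.b) + 1 * ↑q
      rw [hq]; noncomm_ring
  rw [hfact]
  exact (aux_isUnit_lower _).mul (aux_isUnit_upper p q X.b)

lemma aux_quasinil (hs : s ∈ JacobsonRadical R) {X : GenMatrix R s}
    (ha : X.a ∈ JacobsonRadical R) (hd : X.d ∈ JacobsonRadical R) :
    IsQuasinilpotent X := by
  intro Y _
  apply aux_isUnit_of_diag hs
  · show IsUnit (1 + (X.a * Y.a + s * (X.b * Y.c)))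
    exact aux_isUnit_one_add (add_mem (aux_jac_mul_right ha _) (aux_smul_mem hs _))
  · show IsUnit (1 + (s * (X.c * Y.b) + X.d * Y.d))
    exact aux_isUnit_one_add (add_mem (aux_smul_mem hs _) (aux_jac_mul_right hd _))

lemma aux_isSimilar_of_unit {A B : GenMatrix R s} (U : (GenMatrix R s)ˣ)
    (h : A * ↑U = ↑U * B) : IsSimilar A B :=
  ⟨U, by rw [mul_assoc, h, ← mul_assoc, Units.inv_mul, one_mul]⟩

lemma aux_isSimilar_trans {A B C : GenMatrix R s} (h1 : IsSimilar A B)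
    (h2 : IsSimilar B C) : IsSimilar A C := by
  obtain ⟨U, hU⟩ := h1
  obtain ⟨V, hV⟩ := h2
  exact ⟨U * V, by rw [hV, hU, mul_inv_rev, Units.val_mul, Units.val_mul]; simp [mul_assoc]⟩

/-- The flip automorphism of `K_s(R)`. -/
def fl (X : GenMatrix R s) : GenMatrix R s := ⟨X.d, X.c, X.b, X.a⟩

lemma fl_mul (X Y : GenMatrix R s) : fl (X * Y) = fl X * fl Y := by
  ext <;> simp [fl, add_comm]

lemma fl_one : fl (1 : GenMatrix R s) = 1 := rfl

lemma aux_isSimilar_fl {A B : GenMatrix R s} (h : IsSimilar (fl A) B) :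
    IsSimilar A (fl B) := by
  obtain ⟨U, hU⟩ := h
  refine ⟨⟨fl ↑U, fl ↑U⁻¹, ?_, ?_⟩, ?_⟩
  · rw [← fl_mul, Units.mul_inv, fl_one]
  · rw [← fl_mul, Units.inv_mul, fl_one]
  · show fl B = fl ↑U⁻¹ * A * fl ↑U
    rw [hU, fl_mul, fl_mul]
    rfl

lemma aux_conj_diag (hs : s ∈ JacobsonRadical R) (w u' : R) (v : Rˣ) :
    IsSimilar (⟨w, ↑v, 1, u'⟩ : GenMatrix R s) ⟨w, 1, ↑v, ↑v * (u' * ↑v⁻¹)⟩ := by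
  have hDu : IsUnit (⟨1, 0, 0, ↑v⁻¹⟩ : GenMatrix R s) :=
    aux_isUnit_of_diag hs isUnit_one (v⁻¹).isUnit
  obtain ⟨D, hD⟩ := hDu
  apply aux_isSimilar_of_unit D
  rw [hD]
  ext
  · show w * 1 + s * (↑v * 0) = 1 * w + s * (0 * ↑v)
    noncomm_ring
  · show w * 0 + ↑v * ↑v⁻¹ = 1 * 1 + 0 * (↑v * (u' * ↑v⁻¹))
    simp
  · show 1 * 1 + u' * 0 = 0 * w + ↑v⁻¹ * ↑v
    simp
  · show s * (1 * 0) + u' * ↑v⁻¹ = s * (0 * 1) + ↑v⁻¹ * (↑v * (u' * ↑v⁻¹))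
    rw [Units.inv_mul_cancel_left]; noncomm_ring

lemma key_cunit (hs : s ∈ JacobsonRadical R) (a c : Rˣ) (b d : R)
    (hd : d ∈ JacobsonRadical R) :
    ∃ u v w : R, IsUnit u ∧ IsUnit v ∧ w ∈ JacobsonRadical R ∧
      IsSimilar (⟨↑a, b, ↑c, d⟩ : GenMatrix R s) ⟨u, 1, v, w⟩ := by
  set y : R := ↑a⁻¹ * (1 - b) with hy
  set w : R := s * (↑c * y) + d with hw
  set x : R := 1 - y * w with hx
  have hwJ : w ∈ JacobsonRadical R := add_mem (aux_smul_mem hs _) hd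
  have hxu : IsUnit x := by
    rw [hx, sub_eq_add_neg]
    exact aux_isUnit_add isUnit_one (neg_mem (aux_jac_mul_left y hwJ))
  obtain ⟨X, hX⟩ := hxu
  set v : R := ↑c * x with hv
  set u : R := ↑X⁻¹ * (↑a * x - s * (y * v)) with hu
  have hvu : IsUnit v := by
    rw [hv, ← hX]
    exact (c * X).isUnit
  have huu : IsUnit u := by
    have h1 : u = ↑X⁻¹ * (↑a * x) + ↑X⁻¹ * (-(s * (y * v))) := by rw [hu]; noncomm_ring
    rw [h1, ← hX]
    exact aux_isUnit_add (X⁻¹ * (a * X)).isUnit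
      (Ideal.mul_mem_left _ _ (neg_mem (aux_smul_mem hs _)))
  have hUu : IsUnit (⟨x, y, 0, 1⟩ : GenMatrix R s) := by
    apply aux_isUnit_of_diag hs
    · show IsUnit x
      rw [← hX]; exact X.isUnit
    · exact isUnit_one
  obtain ⟨U, hUval⟩ := hUu
  refine ⟨u, v, w, huu, hvu, hwJ, aux_isSimilar_of_unit U ?_⟩
  rw [hUval]
  have hay : ↑a * y = 1 - b := by rw [hy, Units.mul_inv_cancel_left]
  have hxu' : x * u = ↑a * x - s * (y * v) := by
    rw [hu, ← hX, Units.mul_inv_cancel_left]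
  ext
  · show ↑a * x + s * (b * 0) = x * u + s * (y * v)
    rw [hxu']; noncomm_ring
  · show ↑a * y + b * 1 = x * 1 + y * w
    rw [hay, hx]; noncomm_ring
  · show ↑c * x + d * 0 = 0 * u + 1 * v
    rw [hv]; noncomm_ring
  · show s * (↑c * y) + d * 1 = s * (0 * 1) + 1 * w
    rw [hw]; noncomm_ring

lemma key_cjac (hs : s ∈ JacobsonRadical R) (a : Rˣ) (b c d : R)
    (hc : c ∈ JacobsonRadical R) (hd : d ∈ JacobsonRadical R) :
    ∃ u v w : R, IsUnit u ∧ IsUnit v ∧ w ∈ JacobsonRadical R ∧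
      IsSimilar (⟨↑a, b, c, d⟩ : GenMatrix R s) ⟨u, 1, v, w⟩ := by
  set y : R := ↑a⁻¹ * (1 - b) with hy
  have hσ : IsUnit (1 + y * s) := aux_isUnit_one_add (aux_jac_mul_left y hs)
  obtain ⟨Su, hS⟩ := hσ
  set x : R := ↑Su⁻¹ * (1 - y * (s * (c * y) + d)) with hx
  have hcyd : s * (c * y) + d ∈ JacobsonRadical R := add_mem (aux_smul_mem hs _) hd
  have hxu : IsUnit x := by
    rw [hx]
    refine (Su⁻¹).isUnit.mul ?_
    rw [sub_eq_add_neg]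
    exact aux_isUnit_add isUnit_one (neg_mem (aux_jac_mul_left y hcyd))
  obtain ⟨X, hX⟩ := hxu
  set w : R := s * (c * y) + d + s * x with hw
  have hwJ : w ∈ JacobsonRadical R := add_mem hcyd (aux_smul_mem hs _)
  have hτ : IsUnit (1 + s * y) := aux_isUnit_one_add (aux_smul_mem hs y)
  obtain ⟨T, hT⟩ := hτ
  set v : R := ↑T⁻¹ * ((↑a + c - d - s * b) * x) with hv
  have hvu : IsUnit v := by
    rw [hv]
    refine (T⁻¹).isUnit.mul (IsUnit.mul ?_ (by rw [← hX]; exact X.isUnit))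
    have h1 : ↑a + c - d - s * b = ↑a + (c - d - s * b) := by noncomm_ring
    rw [h1]
    exact aux_isUnit_add a.isUnit (sub_mem (sub_mem hc hd) (aux_smul_mem hs b))
  set u : R := ↑X⁻¹ * (↑a * x - s * (b * x) - s * (y * v)) with hu
  have huu : IsUnit u := by
    have h1 : u = ↑X⁻¹ * (↑a * x) + ↑X⁻¹ * (-(s * (b * x)) + -(s * (y * v))) := by
      rw [hu]; noncomm_ring
    rw [h1, ← hX]
    exact aux_isUnit_add (X⁻¹ * (a * X)).isUnit
      (Ideal.mul_mem_left _ _ (add_mem (neg_mem (aux_smul_mem hs _)) (neg_mem (aux_smul_mem hs _))))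
  have hUu : IsUnit (⟨x, y, -x, 1⟩ : GenMatrix R s) := by
    apply aux_isUnit_of_diag hs
    · show IsUnit x
      rw [← hX]; exact X.isUnit
    · exact isUnit_one
  obtain ⟨U, hUval⟩ := hUu
  refine ⟨u, v, w, huu, hvu, hwJ, aux_isSimilar_of_unit U ?_⟩
  rw [hUval]
  have hay : ↑a * y = 1 - b := by rw [hy, Units.mul_inv_cancel_left]
  have hxu' : x * u = ↑a * x - s * (b * x) - s * (y * v) := by
    rw [hu, ← hX, Units.mul_inv_cancel_left]
  have hTv : v + s * (y * v) = (↑a + c - d - s * b) * x := by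
    have h2 : v + s * (y * v) = (1 + s * y) * v := by noncomm_ring
    rw [h2, ← hT, hv, Units.mul_inv_cancel_left]
  have hSx : x + y * (s * x) + y * (s * (c * y) + d) = 1 := by
    have h3 : x + y * (s * x) + y * (s * (c * y) + d)
        = (1 + y * s) * x + y * (s * (c * y) + d) := by noncomm_ring
    rw [h3, ← hS, hx, Units.mul_inv_cancel_left]
    noncomm_ring
  ext
  · show ↑a * x + s * (b * -x) = x * u + s * (y * v)
    rw [hxu']; noncomm_ring
  · show ↑a * y + b * 1 = x * 1 + y * w
    rw [hay, hw]
    have h4 : x * 1 + y * (s * (c * y) + d + s * x)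
        = x + y * (s * x) + y * (s * (c * y) + d) := by noncomm_ring
    rw [h4, hSx]
    noncomm_ring
  · show c * x + d * -x = -x * u + 1 * v
    have h5 : -x * u + 1 * v = -(x * u) + v := by noncomm_ring
    rw [h5, hxu']
    have h7 : -(↑a * x - s * (b * x) - s * (y * v)) + v
        = (v + s * (y * v)) - ↑a * x + s * (b * x) := by noncomm_ring
    rw [h7, hTv]
    noncomm_ring
  · show s * (c * y) + d * 1 = s * (-x * 1) + 1 * w
    rw [hw]; noncomm_ring

lemma aux_flip_case (hs : s ∈ JacobsonRadical R) {A : GenMatrix R s} {u v w : R}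
    (hu : IsUnit u) (hv : IsUnit v) (hw : w ∈ JacobsonRadical R)
    (hsim : IsSimilar (fl A) (⟨u, 1, v, w⟩ : GenMatrix R s)) :
    ∃ u' v' w' : R, IsUnit u' ∧ IsUnit v' ∧ w' ∈ JacobsonRadical R ∧
      IsSimilar A (⟨w', 1, v', u'⟩ : GenMatrix R s) := by
  obtain ⟨vU, hvv⟩ := hv
  have h1 : IsSimilar A (fl ⟨u, 1, v, w⟩) := aux_isSimilar_fl hsim
  have h1' : IsSimilar A (⟨w, ↑vU, 1, u⟩ : GenMatrix R s) := by
    have hfl : fl (⟨u, 1, v, w⟩ : GenMatrix R s) = ⟨w, ↑vU, 1, u⟩ := by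
      ext <;> simp [fl, hvv]
    rwa [hfl] at h1
  exact ⟨↑vU * (u * ↑vU⁻¹), ↑vU, w, vU.isUnit.mul (hu.mul (vU⁻¹).isUnit), vU.isUnit, hw,
    aux_isSimilar_trans h1' (aux_conj_diag hs w u vU)⟩

end Key

end GenMatrix

/-- if `R` is local, `s ∈ J(R)` is central, and `A ∈ K_s(R)` is neither a unit
nor quasinilpotent, then `A` is similar to `[[u,1],[v,w]]` or `[[w,1],[v,u]]` with
`u, v ∈ U(R)` and `w ∈ J(R)`. -/
theorem genMatrix_similar_standard_form {R : Type*} [Ring R] [IsLocalRing R] (s : R)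
    [Fact (s ∈ Set.center R)] (hs : s ∈ JacobsonRadical R) (A : GenMatrix R s)
    (hA1 : ¬ IsUnit A) (hA2 : ¬ IsQuasinilpotent A) :
    ∃ u v w : R, IsUnit u ∧ IsUnit v ∧ w ∈ JacobsonRadical R ∧
      (IsSimilar A (⟨u, 1, v, w⟩ : GenMatrix R s) ∨
       IsSimilar A (⟨w, 1, v, u⟩ : GenMatrix R s)) := by
  by_cases ha : IsUnit A.a
  · by_cases hd : IsUnit A.d
    · exact absurd (GenMatrix.aux_isUnit_of_diag hs ha hd) hA1
    · have hdJ : A.d ∈ JacobsonRadical R := aux_mem_jac_of_not_isUnit hd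
      obtain ⟨a, haa⟩ := ha
      by_cases hc : IsUnit A.c
      · obtain ⟨c, hcc⟩ := hc
        obtain ⟨u, v, w, hu, hv, hw, hsim⟩ := GenMatrix.key_cunit hs a c A.b A.d hdJ
        have hA : A = (⟨↑a, A.b, ↑c, A.d⟩ : GenMatrix R s) := by ext <;> simp [haa, hcc]
        exact ⟨u, v, w, hu, hv, hw, Or.inl (by rw [hA]; exact hsim)⟩
      · have hcJ : A.c ∈ JacobsonRadical R := aux_mem_jac_of_not_isUnit hc
        obtain ⟨u, v, w, hu, hv, hw, hsim⟩ := GenMatrix.key_cjac hs a A.b A.c A.d hcJ hdJ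
        have hA : A = (⟨↑a, A.b, A.c, A.d⟩ : GenMatrix R s) := by ext <;> simp [haa]
        exact ⟨u, v, w, hu, hv, hw, Or.inl (by rw [hA]; exact hsim)⟩
  · have haJ : A.a ∈ JacobsonRadical R := aux_mem_jac_of_not_isUnit ha
    by_cases hd : IsUnit A.d
    · obtain ⟨dU, hdd⟩ := hd
      by_cases hb : IsUnit A.b
      · obtain ⟨bU, hbb⟩ := hb
        obtain ⟨u, v, w, hu, hv, hw, hsim⟩ := GenMatrix.key_cunit hs dU bU A.c A.a haJ
        have hflA : GenMatrix.fl A = (⟨↑dU, A.c, ↑bU, A.a⟩ : GenMatrix R s) := by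
          ext <;> simp [GenMatrix.fl, hdd, hbb]
        obtain ⟨u', v', w', hu', hv', hw', hsim'⟩ :=
          GenMatrix.aux_flip_case hs hu hv hw (by rw [hflA]; exact hsim)
        exact ⟨u', v', w', hu', hv', hw', Or.inr hsim'⟩
      · have hbJ : A.b ∈ JacobsonRadical R := aux_mem_jac_of_not_isUnit hb
        obtain ⟨u, v, w, hu, hv, hw, hsim⟩ := GenMatrix.key_cjac hs dU A.c A.b A.a hbJ haJ
        have hflA : GenMatrix.fl A = (⟨↑dU, A.c, A.b, A.a⟩ : GenMatrix R s) := by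
          ext <;> simp [GenMatrix.fl, hdd]
        obtain ⟨u', v', w', hu', hv', hw', hsim'⟩ :=
          GenMatrix.aux_flip_case hs hu hv hw (by rw [hflA]; exact hsim)
        exact ⟨u', v', w', hu', hv', hw', Or.inr hsim'⟩
    · have hdJ : A.d ∈ JacobsonRadical R := aux_mem_jac_of_not_isUnit hd
      exact absurd (GenMatrix.aux_quasinil hs haJ hdJ) hA2
end

section
/- Let R be a commutative local ring, s ∈ R, and let A ∈ K_s(R) satisfy det_s(A) ∈ J(R). Then tr(A) ∈ J(R) if and only if A is quasinilpotent in K_s(R). -/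
namespace GenMatrix

variable {R : Type*} [CommRing R] {s : R}

lemma dets_mul (X Y : GenMatrix R s) : dets (X * Y) = dets X * dets Y := by
  simp only [dets, mul_a, mul_b, mul_c, mul_d]; ring

lemma dets_one : dets (1 : GenMatrix R s) = 1 := by simp [dets]

lemma isUnit_of_isUnit_dets (M : GenMatrix R s) (h : IsUnit (dets M)) : IsUnit M := by
  obtain ⟨u, hu⟩ := h
  have hk : (↑u⁻¹ : R) * dets M = 1 := by rw [← hu]; exact u.inv_mul
  have hk' : (↑u⁻¹ : R) * (M.a * M.d - s * (M.b * M.c)) = 1 := hk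
  set N : GenMatrix R s := ⟨↑u⁻¹ * M.d, -(↑u⁻¹ * M.b), -(↑u⁻¹ * M.c), ↑u⁻¹ * M.a⟩ with hN
  have h1 : M * N = 1 := by
    ext <;> simp only [hN, mul_a, mul_b, mul_c, mul_d, one_a, one_b, one_c, one_d]
    · linear_combination hk'
    · ring
    · ring
    · linear_combination hk'
  have h2 : N * M = 1 := by
    ext <;> simp only [hN, mul_a, mul_b, mul_c, mul_d, one_a, one_b, one_c, one_d]
    · linear_combination hk'
    · ring
    · ring
    · linear_combination hk'
  exact ⟨⟨M, N, h1, h2⟩, rfl⟩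

lemma isUnit_dets_of_isUnit (M : GenMatrix R s) (h : IsUnit M) : IsUnit (dets M) := by
  obtain ⟨u, hu⟩ := h
  refine ⟨⟨dets M, dets (↑u⁻¹ : GenMatrix R s), ?_, ?_⟩, rfl⟩ <;>
    rw [← dets_mul, ← hu] <;> [rw [u.mul_inv]; rw [u.inv_mul]] <;> exact dets_one

lemma tr_sq (M : GenMatrix R s) : tr M * tr M = tr (M * M) + 2 * dets M := by
  simp only [tr, dets, mul_a, mul_d]; ring

lemma tr_helper (A Y : GenMatrix R s) :
    tr (A * (A * Y)) = tr A * tr (A * Y) - dets A * tr Y := by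
  simp only [tr, dets, mul_a, mul_d, mul_b, mul_c]; ring

lemma dets_one_add (M : GenMatrix R s) : dets (1 + M) = 1 + tr M + dets M := by
  simp only [dets, tr, add_a, add_b, add_c, add_d, one_a, one_b, one_c, one_d]; ring

end GenMatrix


/-- over a commutative local ring `R`, if `A ∈ K_s(R)` has `det_s(A) ∈ J(R)`,
then `tr(A) ∈ J(R)` iff `A` is quasinilpotent in `K_s(R)`. -/
theorem genMatrix_tr_mem_jacobson_iff_isQuasinilpotent {R : Type*} [CommRing R]
    [IsLocalRing R] (s : R) (A : GenMatrix R s)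
    (hdet : GenMatrix.dets A ∈ JacobsonRadical R) :
    GenMatrix.tr A ∈ JacobsonRadical R ↔ IsQuasinilpotent A := by
  open GenMatrix in
  have hJ : JacobsonRadical R = IsLocalRing.maximalIdeal R :=
    IsLocalRing.jacobson_eq_maximalIdeal ⊥ bot_ne_top
  constructor
  · intro htr X hcomm
    set M := A * X with hM
    have hMM : M * M = A * (A * (X * X)) := by
      calc M * M = A * ((X * A) * X) := by rw [hM, mul_assoc, mul_assoc]
      _ = A * (A * (X * X)) := by rw [← hcomm, mul_assoc]
    have hdetM : GenMatrix.dets M ∈ JacobsonRadical R := by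
      rw [hM, GenMatrix.dets_mul]
      exact Ideal.mul_mem_right _ _ hdet
    have htrsq : GenMatrix.tr M * GenMatrix.tr M ∈ JacobsonRadical R := by
      rw [GenMatrix.tr_sq, hMM, GenMatrix.tr_helper]
      refine Ideal.add_mem _ (Ideal.sub_mem _ ?_ ?_) ?_
      · exact Ideal.mul_mem_right _ _ htr
      · exact Ideal.mul_mem_right _ _ hdet
      · exact Ideal.mul_mem_left _ _ hdetM
    have htrM : GenMatrix.tr M ∈ JacobsonRadical R := by
      rw [hJ] at htrsq ⊢
      rcases ((IsLocalRing.maximalIdeal.isMaximal R).isPrime).mem_or_mem htrsq with h | h <;> exact h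
    apply GenMatrix.isUnit_of_isUnit_dets
    rw [GenMatrix.dets_one_add]
    have hmem : GenMatrix.tr M + GenMatrix.dets M ∈ Ideal.jacobson (⊥ : Ideal R) :=
      Ideal.add_mem _ htrM hdetM
    have := Ideal.mem_jacobson_bot.mp hmem 1
    rw [mul_one] at this
    rw [add_assoc, add_comm 1]
    exact this
  · intro hq
    by_contra htr
    rw [hJ, IsLocalRing.notMem_maximalIdeal] at htr
    obtain ⟨u, hu⟩ := htr
    set r : R := -(↑u⁻¹ : R) with hr
    set X : GenMatrix R s := ⟨r, 0, 0, r⟩ with hX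
    have hcomm : A * X = X * A := by
      ext <;> simp only [GenMatrix.mul_a, GenMatrix.mul_b, GenMatrix.mul_c,
        GenMatrix.mul_d, hX] <;> ring
    have hunit := hq X hcomm
    have hdets := GenMatrix.isUnit_dets_of_isUnit _ hunit
    have hrt : r * GenMatrix.tr A = -1 := by
      rw [hr, ← hu, neg_mul, u.inv_mul]
    have hval : GenMatrix.dets (1 + A * X) = r * r * GenMatrix.dets A := by
      rw [GenMatrix.dets_one_add, GenMatrix.dets_mul]
      have h1 : GenMatrix.tr (A * X) = r * GenMatrix.tr A := by
        simp only [GenMatrix.tr, GenMatrix.mul_a, GenMatrix.mul_d, hX]; ring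
      have h2 : GenMatrix.dets X = r * r := by simp [GenMatrix.dets, hX]
      rw [h1, h2, hrt]; ring
    rw [hval] at hdets
    have hmem : r * r * GenMatrix.dets A ∈ IsLocalRing.maximalIdeal R := by
      rw [← hJ]; exact Ideal.mul_mem_left _ _ hdet
    exact (IsLocalRing.mem_maximalIdeal _).mp hmem hdets
end

section
/- Let R be a commutative local ring, s ∈ R, and let A ∈ K_s(R) be neither a unit of K_s(R) nor quasinilpotent in K_s(R). Then A is quasipolar in K_s(R) if and only if the equation x² − tr(A)x + det_s(A) = 0 has a solution in R. -/
/-! ### Auxiliary infrastructure -/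

namespace GenMatrixAux

open GenMatrix

variable {R : Type*} [CommRing R] {s : R}

@[simp] lemma sub_a (X Y : GenMatrix R s) : (X - Y).a = X.a - Y.a := by
  rw [sub_eq_add_neg, sub_eq_add_neg]; rfl
@[simp] lemma sub_b (X Y : GenMatrix R s) : (X - Y).b = X.b - Y.b := by
  rw [sub_eq_add_neg, sub_eq_add_neg]; rfl
@[simp] lemma sub_c (X Y : GenMatrix R s) : (X - Y).c = X.c - Y.c := by
  rw [sub_eq_add_neg, sub_eq_add_neg]; rfl
@[simp] lemma sub_d (X Y : GenMatrix R s) : (X - Y).d = X.d - Y.d := by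
  rw [sub_eq_add_neg, sub_eq_add_neg]; rfl

/-- Scalar matrix. -/
def scal (s : R) (r : R) : GenMatrix R s := ⟨r, 0, 0, r⟩

@[simp] lemma scal_a (r : R) : (scal s r).a = r := rfl
@[simp] lemma scal_b (r : R) : (scal s r).b = 0 := rfl
@[simp] lemma scal_c (r : R) : (scal s r).c = 0 := rfl
@[simp] lemma scal_d (r : R) : (scal s r).d = r := rfl

lemma scal_zero : scal s 0 = 0 := rfl
lemma scal_one : scal s 1 = 1 := rfl

/-- Cayley–Hamilton for `GenMatrix`. -/
lemma ch (X : GenMatrix R s) :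
    X * X = scal s (GenMatrix.tr X) * X - scal s (GenMatrix.dets X) := by
  ext <;> simp [GenMatrix.tr, GenMatrix.dets] <;> ring

lemma dets_mul (X Y : GenMatrix R s) :
    GenMatrix.dets (X * Y) = GenMatrix.dets X * GenMatrix.dets Y := by
  simp [GenMatrix.dets]; ring

lemma dets_one : GenMatrix.dets (1 : GenMatrix R s) = 1 := by
  simp [GenMatrix.dets]

lemma tr_scal_mul (r : R) (X : GenMatrix R s) :
    GenMatrix.tr (scal s r * X) = r * GenMatrix.tr X := by
  simp [GenMatrix.tr]; ring

lemma tr_sub (X Y : GenMatrix R s) :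
    GenMatrix.tr (X - Y) = GenMatrix.tr X - GenMatrix.tr Y := by
  simp [GenMatrix.tr]; ring

lemma dets_one_add (X : GenMatrix R s) :
    GenMatrix.dets (1 + X) = 1 + GenMatrix.tr X + GenMatrix.dets X := by
  simp [GenMatrix.dets, GenMatrix.tr]; ring

/-- If the determinant is a unit then the matrix is a unit. -/
lemma isUnit_of_isUnit_dets {X : GenMatrix R s} (h : IsUnit (GenMatrix.dets X)) :
    IsUnit X := by
  obtain ⟨u, hu⟩ := h
  have hinv : (↑u⁻¹ : R) * GenMatrix.dets X = 1 := by rw [← hu]; exact u.inv_mul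
  have hinv' : GenMatrix.dets X * (↑u⁻¹ : R) = 1 := by rw [mul_comm]; exact hinv
  refine isUnit_iff_exists.mpr ⟨⟨(↑u⁻¹ : R) * X.d, -((↑u⁻¹ : R) * X.b),
    -((↑u⁻¹ : R) * X.c), (↑u⁻¹ : R) * X.a⟩, ?_, ?_⟩ <;>
    · ext <;> simp <;> · simp only [GenMatrix.dets] at hinv; first | ring1 | linear_combination hinv

lemma isUnit_dets_of_isUnit {X : GenMatrix R s} (h : IsUnit X) :
    IsUnit (GenMatrix.dets X) := by
  obtain ⟨u, hu⟩ := h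
  have h1 : (↑u : GenMatrix R s) * ↑u⁻¹ = 1 := u.mul_inv
  have : GenMatrix.dets (↑u : GenMatrix R s) * GenMatrix.dets (↑u⁻¹ : GenMatrix R s) = 1 := by
    rw [← dets_mul, h1, dets_one]
  rw [← hu]
  exact IsUnit.of_mul_eq_one _ this

lemma isUnit_dets_iff {X : GenMatrix R s} : IsUnit X ↔ IsUnit (GenMatrix.dets X) :=
  ⟨isUnit_dets_of_isUnit, isUnit_of_isUnit_dets⟩

end GenMatrixAux

namespace GenMatrixAux

open GenMatrix

variable {R : Type*} [CommRing R] {s : R}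

@[simp] lemma scal_mul_a (r : R) (Y : GenMatrix R s) : (scal s r * Y).a = r * Y.a := by simp
@[simp] lemma scal_mul_b (r : R) (Y : GenMatrix R s) : (scal s r * Y).b = r * Y.b := by simp
@[simp] lemma scal_mul_c (r : R) (Y : GenMatrix R s) : (scal s r * Y).c = r * Y.c := by simp
@[simp] lemma scal_mul_d (r : R) (Y : GenMatrix R s) : (scal s r * Y).d = r * Y.d := by simp

section LocalRing

variable [IsLocalRing R]

lemma nonunit_mul {a : R} (b : R) (ha : ¬IsUnit a) : ¬IsUnit (a * b) := fun h =>
  ha (isUnit_of_mul_isUnit_left h)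

lemma nonunit_add {a b : R} (ha : ¬IsUnit a) (hb : ¬IsUnit b) : ¬IsUnit (a + b) :=
  IsLocalRing.nonunits_add ha hb

lemma nonunit_neg {a : R} (ha : ¬IsUnit a) : ¬IsUnit (-a) := fun h => ha (by simpa using h.neg)

lemma nonunit_sub {a b : R} (ha : ¬IsUnit a) (hb : ¬IsUnit b) : ¬IsUnit (a - b) := by
  rw [sub_eq_add_neg]; exact nonunit_add ha (nonunit_neg hb)

lemma isUnit_one_add {a : R} (ha : ¬IsUnit a) : IsUnit (1 + a) := by
  by_contra h
  have h2 : ¬IsUnit (-a) := nonunit_neg ha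
  have := nonunit_add h h2
  simp at this

lemma nonunit_of_unit_mul {r y : R} (hr : IsUnit r) (h : ¬IsUnit (r * y)) : ¬IsUnit y :=
  fun hy => h (hr.mul hy)

/-- If both trace and determinant are nonunits, `A` is quasinilpotent. -/
lemma quasinilpotent_of_nonunits {A : GenMatrix R s}
    (ht : ¬IsUnit (GenMatrix.tr A)) (hd : ¬IsUnit (GenMatrix.dets A)) :
    IsQuasinilpotent A := by
  intro x hx
  set M := A * x with hM
  have hdM : ¬IsUnit (GenMatrix.dets M) := by
    rw [hM, dets_mul]; exact nonunit_mul _ hd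
  have hMM : M * M = scal s (GenMatrix.tr A) * (A * (x * x)) -
      scal s (GenMatrix.dets A) * (x * x) := by
    have h1 : M * M = (A * A) * (x * x) := by
      rw [hM, mul_assoc, ← mul_assoc x A x, ← hx, mul_assoc, ← mul_assoc, ← mul_assoc]
    rw [h1, ch A, sub_mul, mul_assoc]
  have ea : ¬IsUnit ((M * M).a) := by
    rw [hMM, sub_a, scal_mul_a, scal_mul_a]
    exact nonunit_sub (nonunit_mul _ ht) (nonunit_mul _ hd)
  have ed : ¬IsUnit ((M * M).d) := by
    rw [hMM, sub_d, scal_mul_d, scal_mul_d]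
    exact nonunit_sub (nonunit_mul _ ht) (nonunit_mul _ hd)
  have hch : scal s (GenMatrix.tr M) * M = M * M + scal s (GenMatrix.dets M) := by
    rw [ch M]; abel
  have hta : ¬IsUnit (GenMatrix.tr M * M.a) := by
    have := congrArg GenMatrix.a hch
    rw [scal_mul_a] at this
    rw [this, GenMatrix.add_a, scal_a]
    exact nonunit_add ea hdM
  have htd : ¬IsUnit (GenMatrix.tr M * M.d) := by
    have := congrArg GenMatrix.d hch
    rw [scal_mul_d] at this
    rw [this, GenMatrix.add_d, scal_d]
    exact nonunit_add ed hdM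
  have htrM : ¬IsUnit (GenMatrix.tr M) := by
    by_contra hU
    have h1 := nonunit_of_unit_mul hU hta
    have h2 := nonunit_of_unit_mul hU htd
    exact (nonunit_add h1 h2) (by simpa [GenMatrix.tr] using hU)
  have hdet1 : IsUnit (GenMatrix.dets (1 + M)) := by
    rw [dets_one_add, add_assoc]
    exact isUnit_one_add (nonunit_add htrM hdM)
  exact isUnit_of_isUnit_dets hdet1

end LocalRing

end GenMatrixAux

namespace GenMatrixAux

open GenMatrix

variable {R : Type*} [CommRing R] {s : R}

lemma dets_one_sub (X : GenMatrix R s) :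
    GenMatrix.dets (1 - X) = 1 - GenMatrix.tr X + GenMatrix.dets X := by
  simp [GenMatrix.dets, GenMatrix.tr]; ring

lemma dets_one_add_scal_mul (β : R) (Y : GenMatrix R s) :
    GenMatrix.dets (1 + scal s β * Y) =
      1 + β * (Y.a + Y.d + β * (Y.a * Y.d) - s * (β * (Y.b * Y.c))) := by
  simp [GenMatrix.dets]; ring

lemma idem_cases [IsLocalRing R] {δ : R} (h : δ * δ = δ) : δ = 0 ∨ δ = 1 := by
  rcases IsLocalRing.isUnit_or_isUnit_one_sub_self δ with hu | hu
  · right; exact hu.mul_left_cancel (by rw [mul_one]; exact h)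
  · left
    exact hu.mul_right_cancel (show δ * (1 - δ) = 0 * (1 - δ) by linear_combination -h)

end GenMatrixAux


/-- over a commutative local ring `R`, if `A ∈ K_s(R)` is neither a unit nor
quasinilpotent, then `A` is quasipolar iff `x² - tr(A)x + det_s(A) = 0` is solvable in `R`. -/
theorem genMatrix_isQuasipolar_iff_solvable {R : Type*} [CommRing R] [IsLocalRing R]
    (s : R) (A : GenMatrix R s) (hA1 : ¬ IsUnit A) (hA2 : ¬ IsQuasinilpotent A) :
    IsQuasipolar A ↔
      ∃ x : R, x ^ 2 - GenMatrix.tr A * x + GenMatrix.dets A = 0 := by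
  constructor
  · rintro ⟨p, hidem, hcomm, hunit, hqnil⟩
    have hidem' : p * p = p := hidem
    have hpA : p * A = A * p := hcomm A rfl
    have hδ : GenMatrix.dets p * GenMatrix.dets p = GenMatrix.dets p := by
      rw [← GenMatrixAux.dets_mul, hidem']
    rcases GenMatrixAux.idem_cases hδ with hδ0 | hδ1
    swap
    · -- `dets p = 1`: then `p = 1` and `A` is quasinilpotent, a contradiction
      have hpu : IsUnit p :=
        GenMatrixAux.isUnit_of_isUnit_dets (by rw [hδ1]; exact isUnit_one)
      have hp1 : p = 1 := hpu.mul_left_cancel (by rw [mul_one]; exact hidem')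
      rw [hp1, mul_one] at hqnil
      exact absurd hqnil hA2
    -- `dets p = 0`
    have h1p : (1 - p) * (1 - p) = 1 - p := by
      rw [sub_mul, one_mul, mul_sub, mul_one, hidem']; abel
    have hε : (1 - GenMatrix.tr p) * (1 - GenMatrix.tr p) = 1 - GenMatrix.tr p := by
      have h4 := congrArg GenMatrix.dets h1p
      rw [GenMatrixAux.dets_mul, GenMatrixAux.dets_one_sub, hδ0, add_zero] at h4
      exact h4
    rcases GenMatrixAux.idem_cases hε with hε0 | hε1
    · -- `tr p = 1` : main case
      have hτ : GenMatrix.tr p = 1 := by linear_combination -hε0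
      have hB2 : (A * p) * (A * p) =
          GenMatrixAux.scal s (GenMatrix.tr A) * (A * p) -
            GenMatrixAux.scal s (GenMatrix.dets A) * p := by
        have hstep : (A * p) * (A * p) = (A * A) * p := by
          simp only [mul_assoc]
          rw [← mul_assoc p A p, hpA, mul_assoc A p p, hidem']
        rw [hstep, GenMatrixAux.ch A, sub_mul, mul_assoc]
      have hchB := GenMatrixAux.ch (A * p)
      rw [GenMatrixAux.dets_mul, hδ0, mul_zero, GenMatrixAux.scal_zero, sub_zero] at hchB
      have heq : GenMatrixAux.scal s (GenMatrix.tr (A * p)) * (A * p) =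
          GenMatrixAux.scal s (GenMatrix.tr A) * (A * p) -
            GenMatrixAux.scal s (GenMatrix.dets A) * p := by
        rw [← hchB]; exact hB2
      have hfin := congrArg GenMatrix.tr heq
      rw [GenMatrixAux.tr_scal_mul, GenMatrixAux.tr_sub, GenMatrixAux.tr_scal_mul,
        GenMatrixAux.tr_scal_mul, hτ, mul_one] at hfin
      exact ⟨GenMatrix.tr (A * p), by linear_combination hfin⟩
    · -- `tr p = 0` : then `p = 0` and `A` is a unit, a contradiction
      have hτ0 : GenMatrix.tr p = 0 := by linear_combination -hε1
      have hp0 : p = 0 := by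
        have h3 := GenMatrixAux.ch p
        rw [hidem', hτ0, hδ0, GenMatrixAux.scal_zero, zero_mul, sub_zero] at h3
        exact h3
      rw [hp0, add_zero] at hunit
      exact absurd hunit hA1
  · rintro ⟨x, hx⟩
    have hd : ¬IsUnit (GenMatrix.dets A) := fun h => hA1 (GenMatrixAux.isUnit_of_isUnit_dets h)
    have ht : IsUnit (GenMatrix.tr A) := by
      by_contra h
      exact hA2 (GenMatrixAux.quasinilpotent_of_nonunits h hd)
    obtain ⟨β, hβn, hβ⟩ :
        ∃ β, ¬IsUnit β ∧ β ^ 2 - GenMatrix.tr A * β + GenMatrix.dets A = 0 := by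
      by_cases hxu : IsUnit x
      · refine ⟨GenMatrix.tr A - x, ?_, by linear_combination hx⟩
        intro hxx
        have hprod : x * (GenMatrix.tr A - x) = GenMatrix.dets A := by linear_combination -hx
        exact hd (by rw [← hprod]; exact hxu.mul hxx)
      · exact ⟨x, hxu, hx⟩
    obtain ⟨α, hαdef⟩ : ∃ α, α = GenMatrix.tr A - β := ⟨_, rfl⟩
    have hsum : α + β = GenMatrix.tr A := by linear_combination hαdef
    have hα : IsUnit α := by
      by_contra h
      exact (GenMatrixAux.nonunit_add h hβn) (by rw [hsum]; exact ht)
    have hw : IsUnit (α - β) := by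
      by_contra h
      exact (GenMatrixAux.nonunit_add h hβn)
        (by rw [show (α - β) + β = α by ring]; exact hα)
    obtain ⟨u, hu⟩ := hw
    obtain ⟨v, hv⟩ : ∃ v : R, v * (α - β) = 1 := ⟨↑u⁻¹, by rw [← hu]; exact u.inv_mul⟩
    have hw : IsUnit (α - β) := ⟨u, hu⟩
    simp only [GenMatrix.tr] at hsum
    have h2 : A.a + A.d = α + β := hsum.symm
    simp only [GenMatrix.tr, GenMatrix.dets] at hβ
    have h1 : A.a * A.d - s * (A.b * A.c) = α * β := by linear_combination hβ + β * h2
    refine ⟨⟨v * (α - A.a), -(v * A.b), -(v * A.c), v * (α - A.d)⟩, ?_, ?_, ?_, ?_⟩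
    · -- idempotent
      show _ * _ = _
      ext
      · simp only [GenMatrix.mul_a]
        linear_combination (-(v ^ 2)) * h1 + (v ^ 2 * A.a) * h2 + (v * (α - A.a)) * hv
      · simp only [GenMatrix.mul_b]
        linear_combination (v ^ 2 * A.b) * h2 - (v * A.b) * hv
      · simp only [GenMatrix.mul_c]
        linear_combination (v ^ 2 * A.c) * h2 - (v * A.c) * hv
      · simp only [GenMatrix.mul_d]
        linear_combination (-(v ^ 2)) * h1 + (v ^ 2 * A.d) * h2 + (v * (α - A.d)) * hv
    · -- commutes with the commutant of A
      intro y hy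
      have hya := congrArg GenMatrix.a hy; simp only [GenMatrix.mul_a] at hya
      have hyb := congrArg GenMatrix.b hy; simp only [GenMatrix.mul_b] at hyb
      have hyc := congrArg GenMatrix.c hy; simp only [GenMatrix.mul_c] at hyc
      have hyd := congrArg GenMatrix.d hy; simp only [GenMatrix.mul_d] at hyd
      ext
      · simp only [GenMatrix.mul_a]; linear_combination v * hya
      · simp only [GenMatrix.mul_b]; linear_combination v * hyb
      · simp only [GenMatrix.mul_c]; linear_combination v * hyc
      · simp only [GenMatrix.mul_d]; linear_combination v * hyd
    · -- A + p is a unit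
      apply GenMatrixAux.isUnit_of_isUnit_dets
      have hD : ((α - β) * (α - β)) * GenMatrix.dets
            (A + ⟨v * (α - A.a), -(v * A.b), -(v * A.c), v * (α - A.d)⟩) =
          ((α - β) * (α - β)) * (α * (1 + β)) := by
        simp only [GenMatrix.dets, GenMatrix.add_a, GenMatrix.add_b, GenMatrix.add_c,
          GenMatrix.add_d]
        linear_combination (((1 - v) * (α - β)) ^ 2) * h1 +
          ((α - β) ^ 2 * (1 - v) * v * α) * h2 + ((α - β) ^ 2 * α) * hv
      have hrhs : IsUnit (((α - β) * (α - β)) * (α * (1 + β))) :=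
        (hw.mul hw).mul (hα.mul (GenMatrixAux.isUnit_one_add hβn))
      rw [← hD] at hrhs
      exact isUnit_of_mul_isUnit_right hrhs
    · -- A * p is quasinilpotent
      have hApβ : A * (⟨v * (α - A.a), -(v * A.b), -(v * A.c), v * (α - A.d)⟩ : GenMatrix R s) =
          GenMatrixAux.scal s β * ⟨v * (α - A.a), -(v * A.b), -(v * A.c), v * (α - A.d)⟩ := by
        ext
        · simp only [GenMatrix.mul_a, GenMatrixAux.scal_a, GenMatrixAux.scal_b]
          linear_combination v * h1 - (v * A.a) * h2
        · simp only [GenMatrix.mul_b, GenMatrixAux.scal_a, GenMatrixAux.scal_b]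
          linear_combination (-(v * A.b)) * h2
        · simp only [GenMatrix.mul_c, GenMatrixAux.scal_c, GenMatrixAux.scal_d]
          linear_combination (-(v * A.c)) * h2
        · simp only [GenMatrix.mul_d, GenMatrixAux.scal_c, GenMatrixAux.scal_d]
          linear_combination v * h1 - (v * A.d) * h2
      intro y hy
      rw [hApβ, mul_assoc]
      apply GenMatrixAux.isUnit_of_isUnit_dets
      rw [GenMatrixAux.dets_one_add_scal_mul]
      exact GenMatrixAux.isUnit_one_add (GenMatrixAux.nonunit_mul _ hβn)
end
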